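/- arXiv:1206.3603 — 4 statements merged into one kernel-verified Lean document; each statement's English description precedes it below -/
import Mathlib

section
/- For every real t > 0 and every β ∈ (0,1], we have Φ̄(βt) ≤ Φ̄(t)^{β²}. -/
open Real Set MeasureTheory Filter

/-- `Phi t` is the probability that a standard Gaussian random variable has
absolute value at most `t`. -/
noncomputable def Phi (t : ℝ) : ℝ :=
  (1 / Real.sqrt (2 * Real.pi)) * ∫ x in (-t)..t, Real.exp (-x ^ 2 / 2)

/-- `PhiBar t = 1 - Phi t`. -/
noncomputable def PhiBar (t : ℝ) : ℝ := 1 - Phi t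

namespace PhiBarAux

noncomputable def g (x : ℝ) : ℝ := Real.exp (-x ^ 2 / 2)

noncomputable def c : ℝ := 2 / Real.sqrt (2 * Real.pi)

lemma c_pos : 0 < c := by
  unfold c
  positivity

lemma g_pos (x : ℝ) : 0 < g x := Real.exp_pos _

lemma g_cont : Continuous g := by
  unfold g; continuity

lemma g_intg : MeasureTheory.Integrable g := by
  have : g = fun x => Real.exp (-(1/2) * x^2) := by funext x; unfold g; ring_nf
  rw [this]; exact integrable_exp_neg_mul_sq (by norm_num)

lemma integral_g : ∫ x : ℝ, g x = Real.sqrt (2 * Real.pi) := by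
  have : ∫ x : ℝ, g x = ∫ x : ℝ, Real.exp (-(1/2) * x^2) := by
    congr 1; funext x; unfold g; ring_nf
  rw [this, integral_gaussian, show Real.pi / (1/2) = 2 * Real.pi by ring]

lemma integral_g_Ioi_zero : ∫ x in Ioi (0:ℝ), g x = Real.sqrt (2 * Real.pi) / 2 := by
  have habs : ∫ x : ℝ, g |x| = 2 * ∫ x in Ioi (0:ℝ), g x := integral_comp_abs
  have : (fun x : ℝ => g |x|) = g := by
    funext x; unfold g; rw [sq_abs]
  rw [this, integral_g] at habs
  linarith

lemma c_mul : c * (Real.sqrt (2 * Real.pi) / 2) = 1 := by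
  unfold c
  have h : Real.sqrt (2 * Real.pi) ≠ 0 := by positivity
  field_simp

lemma Phi_eq (t : ℝ) : Phi t = c * ∫ x in (0:ℝ)..t, g x := by
  unfold Phi c
  have h1 : ∫ x in (-t)..(0:ℝ), g x = ∫ x in (0:ℝ)..t, g x := by
    have := intervalIntegral.integral_comp_neg (a := (0:ℝ)) (b := t) g
    rw [neg_zero] at this
    rw [← this]
    congr 1; funext x; unfold g; ring_nf
  have h2 : ∫ x in (-t)..t, g x = 2 * ∫ x in (0:ℝ)..t, g x := by
    rw [← intervalIntegral.integral_add_adjacent_intervals (a := -t) (b := (0:ℝ)) (c := t)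
      (g_intg.intervalIntegrable) (g_intg.intervalIntegrable), h1]
    ring
  have : (∫ x in (-t)..t, Real.exp (-x ^ 2 / 2)) = ∫ x in (-t)..t, g x := rfl
  rw [this, h2]
  ring

lemma PhiBar_eq (t : ℝ) : PhiBar t = 1 - c * ∫ x in (0:ℝ)..t, g x := by
  unfold PhiBar; rw [Phi_eq]

lemma split (t : ℝ) (ht : 0 ≤ t) :
    ∫ x in Ioi (0:ℝ), g x = (∫ x in (0:ℝ)..t, g x) + ∫ x in Ioi t, g x := by
  rw [intervalIntegral.integral_of_le ht, ← MeasureTheory.setIntegral_union]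
  · rw [Set.Ioc_union_Ioi_eq_Ioi ht]
  · exact Set.Ioc_disjoint_Ioi le_rfl
  · exact measurableSet_Ioi
  · exact g_intg.integrableOn
  · exact g_intg.integrableOn

lemma PhiBar_tail (t : ℝ) (ht : 0 ≤ t) : PhiBar t = c * ∫ x in Ioi t, g x := by
  rw [PhiBar_eq]
  have h := split t ht
  have h1 : c * ∫ x in Ioi (0:ℝ), g x = 1 := by
    rw [integral_g_Ioi_zero]; exact c_mul
  have : (∫ x in (0:ℝ)..t, g x) = (∫ x in Ioi (0:ℝ), g x) - ∫ x in Ioi t, g x := by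
    linarith
  rw [this]
  ring_nf
  nlinarith [h1]

lemma PhiBar_pos (t : ℝ) (ht : 0 ≤ t) : 0 < PhiBar t := by
  rw [PhiBar_tail t ht]
  apply mul_pos c_pos
  apply MeasureTheory.setIntegral_pos_iff_support_of_nonneg_ae ?_ ?_ |>.mpr
  · have : (Function.support g) ∩ Ioi t = Ioi t := by
      rw [Set.inter_eq_right]
      intro x _
      exact (g_pos x).ne'
    rw [this]
    simp
  · filter_upwards with x using (g_pos x).le
  · exact g_intg.integrableOn

lemma PhiBar_nonneg (t : ℝ) (ht : 0 ≤ t) : 0 ≤ PhiBar t := (PhiBar_pos t ht).le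

lemma PhiBar_zero : PhiBar 0 = 1 := by
  rw [PhiBar_eq]; simp

lemma PhiBar_hasDeriv (s : ℝ) : HasDerivAt PhiBar (-(c * g s)) s := by
  have h : HasDerivAt (fun u => ∫ x in (0:ℝ)..u, g x) (g s) s := by
    apply intervalIntegral.integral_hasDerivAt_right (g_intg.intervalIntegrable)
      (g_cont.stronglyMeasurable.stronglyMeasurableAtFilter) (g_cont.continuousAt)
  have : PhiBar = fun u => 1 - c * ∫ x in (0:ℝ)..u, g x := by
    funext u; exact PhiBar_eq u
  rw [this]
  simpa using ((h.const_mul c).const_sub 1)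

lemma PhiBar_tendsto_zero : Tendsto PhiBar atTop (nhds 0) := by
  have h : Tendsto (fun t => ∫ x in (0:ℝ)..t, g x) atTop
      (nhds (∫ x in Ioi (0:ℝ), g x)) :=
    MeasureTheory.intervalIntegral_tendsto_integral_Ioi 0 g_intg.integrableOn tendsto_id
  have h2 : Tendsto (fun t => 1 - c * ∫ x in (0:ℝ)..t, g x) atTop
      (nhds (1 - c * ∫ x in Ioi (0:ℝ), g x)) :=
    (tendsto_const_nhds.sub (h.const_mul c))
  have h3 : 1 - c * ∫ x in Ioi (0:ℝ), g x = 0 := by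
    rw [integral_g_Ioi_zero, c_mul]; ring
  rw [h3] at h2
  convert h2 using 1
  funext u; exact PhiBar_eq u

lemma g_hasDeriv (s : ℝ) : HasDerivAt g (-s * g s) s := by
  have h1 : HasDerivAt (fun x : ℝ => -x ^ 2 / 2) (-s) s := by
    have : HasDerivAt (fun x : ℝ => -x ^ 2 / 2) (-((2:ℕ) * s ^ (2 - 1)) / 2) s :=
      ((hasDerivAt_pow 2 s).neg.div_const 2)
    convert this using 1
    simp; ring
  have : HasDerivAt g (Real.exp (-s ^ 2 / 2) * -s) s := h1.exp
  convert this using 1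
  unfold g; ring

lemma g_tendsto_zero : Tendsto g atTop (nhds 0) := by
  have h : Tendsto (fun s : ℝ => -s ^ 2 / 2) atTop atBot := by
    apply Filter.Tendsto.atBot_div_const (by norm_num : (0:ℝ) < 2)
    exact Filter.tendsto_neg_atBot_iff.mpr (tendsto_pow_atTop (by norm_num))
  exact Real.tendsto_exp_atBot.comp h

noncomputable def q (s : ℝ) : ℝ := c * (s * g s / (1 + s ^ 2))

lemma q_hasDeriv (s : ℝ) :
    HasDerivAt q (c * ((1 - 2*s^2 - s^4) * g s / (1 + s^2)^2)) s := by
  have hv : HasDerivAt (fun s : ℝ => 1 + s ^ 2) (2 * s) s := by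
    simpa using ((hasDerivAt_pow 2 s).const_add 1)
  have hu : HasDerivAt (fun s => s * g s) (1 * g s + s * (-s * g s)) s :=
    (hasDerivAt_id s).mul (g_hasDeriv s)
  have hv0 : (1 + s ^ 2) ≠ 0 := by positivity
  have h : HasDerivAt q (c * (((1 * g s + s * (-s * g s)) * (1 + s ^ 2) - s * g s * (2 * s))
      / (1 + s ^ 2) ^ 2)) s := (hu.div hv hv0).const_mul c
  convert h using 2
  field_simp
  ring

lemma q_tendsto_zero : Tendsto q atTop (nhds 0) := by
  have hle : ∀ᶠ s in atTop, q s ≤ c * g s := by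
    filter_upwards [eventually_ge_atTop (0:ℝ)] with s hs
    unfold q
    have hs2 : s ≤ 1 + s ^ 2 := by nlinarith [sq_nonneg (s-1)]
    have h1 : s * g s / (1 + s ^ 2) ≤ g s := by
      rw [div_le_iff₀ (by positivity)]
      calc s * g s ≤ (1 + s ^ 2) * g s :=
            mul_le_mul_of_nonneg_right hs2 (g_pos s).le
        _ = g s * (1 + s ^ 2) := by ring
    nlinarith [c_pos]
  have hge : ∀ᶠ s in atTop, 0 ≤ q s := by
    filter_upwards [eventually_ge_atTop (0:ℝ)] with s hs
    unfold q
    exact mul_nonneg c_pos.le (div_nonneg (mul_nonneg hs (g_pos s).le) (by positivity))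
  have hg0 : Tendsto (fun s => c * g s) atTop (nhds 0) := by
    simpa using g_tendsto_zero.const_mul c
  exact tendsto_of_tendsto_of_tendsto_of_le_of_le' tendsto_const_nhds hg0 hge hle

noncomputable def hfun (s : ℝ) : ℝ := PhiBar s - q s

lemma hfun_hasDeriv (s : ℝ) :
    HasDerivAt hfun (-(c * g s) - c * ((1 - 2*s^2 - s^4) * g s / (1 + s^2)^2)) s :=
  (PhiBar_hasDeriv s).sub (q_hasDeriv s)

lemma hfun_antitone : Antitone hfun := by
  apply antitone_of_deriv_nonpos
  · intro s
    exact (hfun_hasDeriv s).differentiableAt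
  · intro s
    rw [(hfun_hasDeriv s).deriv]
    have hv0 : (0:ℝ) < (1 + s ^ 2)^2 := by positivity
    have hg := g_pos s
    have key : -(c * g s) - c * ((1 - 2*s^2 - s^4) * g s / (1 + s^2)^2)
        = -(2 * c * g s) / (1 + s^2)^2 := by
      field_simp
      ring
    rw [key]
    apply div_nonpos_of_nonpos_of_nonneg _ hv0.le
    nlinarith [c_pos, hg]

lemma hfun_tendsto_zero : Tendsto hfun atTop (nhds 0) := by
  have := PhiBar_tendsto_zero.sub q_tendsto_zero
  rw [sub_zero] at this
  exact this

/-- Classical Gaussian tail lower bound: `PhiBar s ≥ c * s * g s / (1 + s^2)`. -/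
lemma tail_lower (s : ℝ) :
    c * (s * g s / (1 + s ^ 2)) ≤ PhiBar s := by
  have h0 : (0:ℝ) ≤ hfun s := by
    apply le_of_tendsto hfun_tendsto_zero
    filter_upwards [eventually_ge_atTop s] with u hu
    exact hfun_antitone hu
  unfold hfun q at h0
  linarith

noncomputable def M (s : ℝ) : ℝ := s * PhiBar s * Real.exp (s ^ 2 / 2)

lemma M_hasDeriv (s : ℝ) :
    HasDerivAt M ((1 + s ^ 2) * PhiBar s * Real.exp (s ^ 2 / 2) - c * s) s := by
  have he : HasDerivAt (fun s : ℝ => Real.exp (s ^ 2 / 2)) (s * Real.exp (s ^ 2 / 2)) s := by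
    have h1 : HasDerivAt (fun x : ℝ => x ^ 2 / 2) s s := by
      have : HasDerivAt (fun x : ℝ => x ^ 2 / 2) (((2:ℕ) * s ^ (2 - 1)) / 2) s :=
        (hasDerivAt_pow 2 s).div_const 2
      convert this using 1
      ring
    simpa [mul_comm] using h1.exp
  have hm : HasDerivAt (fun s => s * PhiBar s) (1 * PhiBar s + s * (-(c * g s))) s :=
    (hasDerivAt_id s).mul (PhiBar_hasDeriv s)
  have h : HasDerivAt M _ s := hm.mul he
  have hgg : g s * Real.exp (s ^ 2 / 2) = 1 := by
    unfold g
    rw [← Real.exp_add, show -s ^ 2 / 2 + s ^ 2 / 2 = 0 by ring, Real.exp_zero]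
  convert h using 1
  have expand : (1 * PhiBar s + s * -(c * g s)) * Real.exp (s ^ 2 / 2)
      + s * PhiBar s * (s * Real.exp (s ^ 2 / 2))
      = (1 + s ^ 2) * PhiBar s * Real.exp (s ^ 2 / 2) - c * s * (g s * Real.exp (s ^ 2 / 2)) := by
    ring
  rw [expand, hgg, mul_one]

lemma M_mono : MonotoneOn M (Ici (0:ℝ)) := by
  apply monotoneOn_of_deriv_nonneg (convex_Ici 0)
  · exact fun s _ => ((M_hasDeriv s).differentiableAt).continuousAt.continuousWithinAt
  · exact fun s _ => ((M_hasDeriv s).differentiableAt).differentiableWithinAt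
  · intro s hs
    rw [interior_Ici] at hs
    rw [(M_hasDeriv s).deriv]
    have hs0 : (0:ℝ) ≤ s := le_of_lt hs
    have htl := tail_lower s
    have hpos : (0:ℝ) < (1 + s ^ 2) := by positivity
    have hge : c * (s * g s / (1 + s ^ 2)) * ((1 + s ^ 2) * Real.exp (s ^ 2 / 2))
        ≤ PhiBar s * ((1 + s ^ 2) * Real.exp (s ^ 2 / 2)) :=
      mul_le_mul_of_nonneg_right htl (by positivity)
    have hgg : g s * Real.exp (s ^ 2 / 2) = 1 := by
      unfold g
      rw [← Real.exp_add, show -s ^ 2 / 2 + s ^ 2 / 2 = 0 by ring, Real.exp_zero]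
    have hsimp : c * (s * g s / (1 + s ^ 2)) * ((1 + s ^ 2) * Real.exp (s ^ 2 / 2))
        = c * s := by
      have h1 : c * (s * g s / (1 + s ^ 2)) * ((1 + s ^ 2) * Real.exp (s ^ 2 / 2))
          = c * s * (g s * Real.exp (s ^ 2 / 2)) * ((1 + s ^ 2) / (1 + s ^ 2)) := by
        ring
      rw [h1, hgg, div_self hpos.ne', mul_one, mul_one]
    rw [hsimp] at hge
    nlinarith [hge]

/-- Monotonicity of `s ↦ s * PhiBar s / g s`. -/
lemma key_ratio {a b : ℝ} (ha : 0 < a) (hab : a ≤ b) :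
    a * PhiBar a * g b ≤ b * PhiBar b * g a := by
  have hM := M_mono (mem_Ici.mpr ha.le) (mem_Ici.mpr (ha.le.trans hab)) hab
  unfold M at hM
  have hgb := g_pos b
  have hga := g_pos a
  have h := mul_le_mul_of_nonneg_right hM (mul_nonneg hga.le hgb.le)
  have ea : Real.exp (a ^ 2 / 2) * g a = 1 := by
    unfold g
    rw [← Real.exp_add, show a ^ 2 / 2 + -a ^ 2 / 2 = 0 by ring, Real.exp_zero]
  have eb : Real.exp (b ^ 2 / 2) * g b = 1 := by
    unfold g
    rw [← Real.exp_add, show b ^ 2 / 2 + -b ^ 2 / 2 = 0 by ring, Real.exp_zero]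
  have l1 : a * PhiBar a * Real.exp (a ^ 2 / 2) * (g a * g b)
      = a * PhiBar a * g b * (Real.exp (a ^ 2 / 2) * g a) := by ring
  have l2 : b * PhiBar b * Real.exp (b ^ 2 / 2) * (g a * g b)
      = b * PhiBar b * g a * (Real.exp (b ^ 2 / 2) * g b) := by ring
  rw [l1, ea, mul_one, l2, eb, mul_one] at h
  exact h

end PhiBarAux

theorem phiBar_scaling (t β : ℝ) (ht : 0 < t) (hβ0 : 0 < β) (hβ1 : β ≤ 1) :
    PhiBar (β * t) ≤ (PhiBar t) ^ (β ^ 2) := by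
  open PhiBarAux in
  set G : ℝ → ℝ := fun s => β ^ 2 * Real.log (PhiBar s) - Real.log (PhiBar (β * s)) with hGdef
  have hG : ∀ s : ℝ, 0 ≤ s →
      HasDerivAt G (β ^ 2 * (-(c * g s) / PhiBar s)
        - -(c * g (β * s)) * β / PhiBar (β * s)) s := by
    intro s hs
    have h1 : HasDerivAt (fun u => Real.log (PhiBar u)) (-(c * g s) / PhiBar s) s :=
      (PhiBar_hasDeriv s).log (PhiBar_pos s hs).ne'
    have hβs : HasDerivAt (fun u : ℝ => β * u) β s := by
      simpa using (hasDerivAt_id s).const_mul β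
    have h2 : HasDerivAt (fun u => PhiBar (β * u)) (-(c * g (β * s)) * β) s :=
      (PhiBar_hasDeriv (β * s)).comp s hβs
    have h3 : HasDerivAt (fun u => Real.log (PhiBar (β * u)))
        (-(c * g (β * s)) * β / PhiBar (β * s)) s :=
      h2.log (PhiBar_pos (β * s) (mul_nonneg hβ0.le hs)).ne'
    exact (h1.const_mul (β ^ 2)).sub h3
  have hmono : MonotoneOn G (Icc 0 t) := by
    apply monotoneOn_of_deriv_nonneg (convex_Icc 0 t)
    · exact fun s hs => (hG s hs.1).differentiableAt.continuousAt.continuousWithinAt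
    · intro s hs
      rw [interior_Icc] at hs
      exact (hG s hs.1.le).differentiableAt.differentiableWithinAt
    · intro s hs
      rw [interior_Icc] at hs
      obtain ⟨hs0, _⟩ := hs
      rw [(hG s hs0.le).deriv]
      have hA : 0 < PhiBar (β * s) := PhiBar_pos _ (by positivity)
      have hB : 0 < PhiBar s := PhiBar_pos _ hs0.le
      have key : (β * s) * PhiBar (β * s) * g s ≤ s * PhiBar s * g (β * s) :=
        key_ratio (mul_pos hβ0 hs0) (by nlinarith)
      have h2 : β * g s / PhiBar s ≤ g (β * s) / PhiBar (β * s) := by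
        rw [div_le_div_iff₀ hB hA]
        have : s * (β * g s * PhiBar (β * s)) ≤ s * (g (β * s) * PhiBar s) := by
          nlinarith [key]
        exact le_of_mul_le_mul_left this hs0
      have h4 := mul_le_mul_of_nonneg_left h2 (mul_nonneg c_pos.le hβ0.le)
      have e1 : c * β * (β * g s / PhiBar s) = -(β ^ 2 * (-(c * g s) / PhiBar s)) := by
        ring
      have e2 : c * β * (g (β * s) / PhiBar (β * s))
          = -(-(c * g (β * s)) * β / PhiBar (β * s)) := by
        ring
      rw [e1, e2] at h4
      linarith
  have hG0 : G 0 = 0 := by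
    simp [hGdef, PhiBarAux.PhiBar_zero]
  have hGt : 0 ≤ G t := by
    have := hmono (Set.mem_Icc.mpr ⟨le_rfl, ht.le⟩) (Set.mem_Icc.mpr ⟨ht.le, le_rfl⟩) ht.le
    rw [hG0] at this
    exact this
  have hlog : Real.log (PhiBar (β * t)) ≤ β ^ 2 * Real.log (PhiBar t) := by
    simp only [hGdef] at hGt
    linarith
  have hA : 0 < PhiBar (β * t) := PhiBarAux.PhiBar_pos _ (by positivity)
  have hB : 0 < PhiBar t := PhiBarAux.PhiBar_pos _ ht.le
  calc PhiBar (β * t) = Real.exp (Real.log (PhiBar (β * t))) := (Real.exp_log hA).symm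
    _ ≤ Real.exp (Real.log (PhiBar t) * β ^ 2) := by
        apply Real.exp_le_exp.mpr
        linarith [hlog]
    _ = (PhiBar t) ^ (β ^ 2) := (Real.rpow_def_of_pos hB _).symm
end

section
/- For every real t > 0, we have −2·log(Φ̄(t))·Φ̄(t) − (2t·e^{-t²/2})/√(2π) > 0; that is, −2·Φ̄(t)·log(Φ̄(t)) > (2t/√(2π))·e^{-t²/2}. -/
open MeasureTheory Real Filter Set intervalIntegral Topology


namespace PhiAux

noncomputable def f (x : ℝ) : ℝ := Real.exp (-x ^ 2 / 2)

lemma f_eq : f = fun x => Real.exp (-(1/2) * x ^ 2) := by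
  funext x; simp only [f]; ring_nf

lemma f_pos (x : ℝ) : 0 < f x := Real.exp_pos _

lemma f_cont : Continuous f := by unfold f; fun_prop

lemma f_integrable : Integrable f := by
  rw [f_eq]; exact integrable_exp_neg_mul_sq (by norm_num)

lemma f_integral : ∫ x, f x = Real.sqrt (2 * Real.pi) := by
  rw [f_eq, integral_gaussian]
  norm_num [mul_comm]

lemma cpos : 0 < Real.sqrt (2 * Real.pi) :=
  Real.sqrt_pos.2 (by positivity)

noncomputable def T (t : ℝ) : ℝ := ∫ x in Ioi t, f x

lemma T_pos (t : ℝ) : 0 < T t := by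
  rw [T, setIntegral_pos_iff_support_of_nonneg_ae]
  · have : Function.support f = univ := eq_univ_of_forall fun x => (f_pos x).ne'
    rw [this, univ_inter]; simp [Real.volume_Ioi]
  · exact Filter.Eventually.of_forall fun x => (f_pos x).le
  · exact f_integrable.integrableOn


lemma f_even (x : ℝ) : f (-x) = f x := by simp [f]

noncomputable def Phi0 (t : ℝ) : ℝ :=
  (1 / Real.sqrt (2 * Real.pi)) * ∫ x in (-t)..t, f x

lemma PhiBar0_eq {t : ℝ} (ht : 0 ≤ t) : 1 - Phi0 t = 2 / Real.sqrt (2 * Real.pi) * T t := by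
  have hc := cpos
  have h1 : ∫ x, f x = (∫ x in Iic (-t), f x) + ∫ x in Ioi (-t), f x :=
    (integral_Iic_add_Ioi f_integrable.integrableOn f_integrable.integrableOn).symm
  have h2 : (∫ x in Ioi (-t), f x) = (∫ x in Ioc (-t) t, f x) + ∫ x in Ioi t, f x := by
    rw [← Ioc_union_Ioi_eq_Ioi (by linarith : -t ≤ t)]
    rw [setIntegral_union (Ioc_disjoint_Ioi le_rfl) measurableSet_Ioi
      f_integrable.integrableOn f_integrable.integrableOn]
  have h3 : (∫ x in Iic (-t), f x) = ∫ x in Ioi t, f x := by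
    rw [← integral_comp_neg_Ioi]
    exact setIntegral_congr_fun measurableSet_Ioi fun x _ => f_even x
  have h4 : (∫ x in (-t)..t, f x) = ∫ x in Ioc (-t) t, f x :=
    integral_of_le (by linarith)
  have h5 := f_integral
  rw [Phi0, h4]
  have hI : Real.sqrt (2 * Real.pi) = (∫ x in Ioc (-t) t, f x) + 2 * T t := by
    rw [← h5, h1, h2, h3, T]; ring
  set c := Real.sqrt (2 * Real.pi) with hcdef
  have hc0 : c ≠ 0 := ne_of_gt hc
  have hI2 : (∫ x in Ioc (-t) t, f x) = c - 2 * T t := by linarith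
  rw [hI2]
  field_simp
  ring

lemma T_mul_lt (t : ℝ) (ht : 0 < t) : T t * t < Real.exp (-t ^ 2 / 2) := by
  have hintx : IntegrableOn (fun x => x * f x) (Ioi t) := by
    have h := integrable_mul_exp_neg_mul_sq (by norm_num : (0:ℝ) < 1/2)
    have heq : (fun x : ℝ => x * Real.exp (-(1/2) * x ^ 2)) = fun x => x * f x := by
      funext x; rw [f]; ring_nf
    rw [← heq]; exact h.integrableOn
  have hxf : (∫ x in Ioi t, x * f x) = Real.exp (-t ^ 2 / 2) := by
    have hderiv : ∀ x ∈ Ioi t, HasDerivAt (fun y : ℝ => -Real.exp (-y ^ 2 / 2)) (x * f x) x := by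
      intro x _
      have h1 : HasDerivAt (fun y : ℝ => -y ^ 2 / 2) (-x) x := by
        have h0 := ((hasDerivAt_pow 2 x).div_const 2).neg
        have e1 : -((2:ℕ) * x ^ (2 - 1) / 2) = -x := by norm_num
        rw [e1] at h0
        exact h0.congr_of_eventuallyEq (Filter.Eventually.of_forall fun y => by simp only [Pi.neg_apply]; ring)
      have h2 : HasDerivAt (fun y : ℝ => -Real.exp (-y ^ 2 / 2)) (-(Real.exp (-x ^ 2 / 2) * -x)) x :=
        (h1.exp).neg
      convert h2 using 1
      simp only [f]; ring
    have htop : Tendsto (fun y : ℝ => -Real.exp (-y ^ 2 / 2)) atTop (𝓝 0) := by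
      rw [← neg_zero]
      apply Tendsto.neg
      apply Real.tendsto_exp_atBot.comp
      have h1 : Tendsto (fun y : ℝ => y ^ 2 / 2) atTop atTop :=
        (tendsto_pow_atTop two_ne_zero).atTop_div_const (by norm_num)
      have := tendsto_neg_atTop_atBot.comp h1
      refine this.congr fun y => by simp [neg_div]
    have key := integral_Ioi_of_hasDerivAt_of_tendsto
      ((f_cont.neg).continuousAt.continuousWithinAt) hderiv hintx htop
    rw [key]; simp [f]
  have hsub : (∫ x in Ioi t, (x - t) * f x)
      = (∫ x in Ioi t, x * f x) - t * T t := by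
    have h6 : (∫ x in Ioi t, (x - t) * f x) = ∫ x in Ioi t, (x * f x - t * f x) :=
      setIntegral_congr_fun measurableSet_Ioi fun x _ => by ring
    rw [h6, MeasureTheory.integral_sub hintx ((f_integrable.integrableOn).const_mul t),
      MeasureTheory.integral_const_mul, T]
  have hpos : 0 < ∫ x in Ioi t, (x - t) * f x := by
    rw [setIntegral_pos_iff_support_of_nonneg_ae]
    · have hsub2 : Ioi t ⊆ Function.support (fun x => (x - t) * f x) ∩ Ioi t := by
        intro x hx
        refine ⟨?_, hx⟩
        have : 0 < (x - t) * f x := mul_pos (by simpa using hx) (f_pos x)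
        exact this.ne'
      have hm := measure_mono (μ := (volume : Measure ℝ)) hsub2
      have h0 : (0 : ENNReal) < volume (Ioi t) := by simp [Real.volume_Ioi]
      exact lt_of_lt_of_le h0 hm
    · filter_upwards [ae_restrict_mem measurableSet_Ioi] with x hx
      exact le_of_lt (mul_pos (by simpa using hx) (f_pos x))
    · have h7 := hintx.sub ((f_integrable.integrableOn).const_mul t)
      exact MeasureTheory.IntegrableOn.congr_fun h7
        (fun x _ => by simp [Pi.sub_apply]; ring) measurableSet_Ioi
  rw [hsub, hxf] at hpos
  have := mul_comm (T t) t
  linarith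


lemma int_symm (t : ℝ) : (∫ x in (-t)..t, f x) = 2 * ∫ x in (0:ℝ)..t, f x := by
  have h0 := intervalIntegral.integral_comp_neg (a := (0:ℝ)) (b := t) f
  simp only [f_even, neg_zero] at h0
  have h1 : (∫ x in (-t)..(0:ℝ), f x) = ∫ x in (0:ℝ)..t, f x := h0.symm
  have h2 : (∫ x in (-t)..t, f x) = (∫ x in (-t)..(0:ℝ), f x) + ∫ x in (0:ℝ)..t, f x :=
    (intervalIntegral.integral_add_adjacent_intervals
      (f_integrable.intervalIntegrable) (f_integrable.intervalIntegrable)).symm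
  rw [h2, h1]; ring


lemma phi_eq : Phi = fun t => 2 / Real.sqrt (2 * Real.pi) * ∫ x in (0:ℝ)..t, f x := by
  funext t
  show (1 / Real.sqrt (2 * Real.pi)) * (∫ x in (-t)..t, f x) = _
  rw [int_symm t]; ring

lemma PhiBar_eq_tail {t : ℝ} (ht : 0 ≤ t) :
    PhiBar t = 2 / Real.sqrt (2 * Real.pi) * T t := by
  have : PhiBar t = 1 - Phi0 t := rfl
  rw [this, PhiBar0_eq ht]

lemma B_pos {t : ℝ} (ht : 0 ≤ t) : 0 < PhiBar t := by
  rw [PhiBar_eq_tail ht]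
  have := cpos
  exact mul_pos (by positivity) (T_pos t)

lemma B_lt_one {t : ℝ} (ht : 0 < t) : PhiBar t < 1 := by
  have h1 : 0 < Phi t := by
    rw [phi_eq]
    have := cpos
    exact mul_pos (by positivity)
      (intervalIntegral.intervalIntegral_pos_of_pos (f_integrable.intervalIntegrable)
        f_pos ht)
  have : PhiBar t = 1 - Phi t := rfl
  linarith

lemma PhiBar_zero : PhiBar 0 = 1 := by
  have : Phi 0 = 0 := by
    show (1 / Real.sqrt (2 * Real.pi)) * (∫ x in (-(0:ℝ))..(0:ℝ), f x) = 0
    simp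
  show 1 - Phi 0 = 1
  rw [this]; ring

lemma hasDerivAt_PhiBar (t : ℝ) :
    HasDerivAt PhiBar (-(2 / Real.sqrt (2 * Real.pi) * f t)) t := by
  have h1 : HasDerivAt (fun u => ∫ x in (0:ℝ)..u, f x) (f t) t :=
    intervalIntegral.integral_hasDerivAt_right (f_integrable.intervalIntegrable)
      (f_cont.stronglyMeasurable.stronglyMeasurableAtFilter) f_cont.continuousAt
  have h2 : HasDerivAt Phi (2 / Real.sqrt (2 * Real.pi) * f t) t := by
    rw [phi_eq]; exact h1.const_mul _
  have h3 := (hasDerivAt_const t (1:ℝ)).sub h2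
  have h4 : HasDerivAt (fun u => 1 - Phi u) (-(2 / Real.sqrt (2 * Real.pi) * f t)) t := by
    rw [zero_sub] at h3; exact h3
  exact h4

lemma hasDerivAt_exp_part (t : ℝ) :
    HasDerivAt (fun u : ℝ => Real.exp (-u ^ 2 / 2)) (f t * -t) t := by
  have h1 : HasDerivAt (fun y : ℝ => -y ^ 2 / 2) (-t) t := by
    have h0 := ((hasDerivAt_pow 2 t).div_const 2).neg
    have e1 : -((2:ℕ) * t ^ (2 - 1) / 2) = -t := by norm_num
    rw [e1] at h0
    exact h0.congr_of_eventuallyEq (Filter.Eventually.of_forall fun y => by simp only [Pi.neg_apply]; ring)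
  exact h1.exp

noncomputable def gf (t : ℝ) : ℝ := t ^ 2 + 1 + 2 * Real.log (PhiBar t)

noncomputable def hf (t : ℝ) : ℝ :=
  -2 * Real.log (PhiBar t) * PhiBar t
    - 2 * t * Real.exp (-t ^ 2 / 2) / Real.sqrt (2 * Real.pi)

lemma hasDerivAt_gf {t : ℝ} (ht : 0 ≤ t) :
    HasDerivAt gf (2 * t - 4 / Real.sqrt (2 * Real.pi) * f t / PhiBar t) t := by
  have hB := hasDerivAt_PhiBar t
  have hlog := hB.log (B_pos ht).ne'
  have h1 := ((hasDerivAt_pow 2 t).add_const 1).add (hlog.const_mul 2)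
  have h2 : HasDerivAt gf
      ((2:ℕ) * t ^ (2 - 1) + 2 * (-(2 / Real.sqrt (2 * Real.pi) * f t) / PhiBar t)) t := h1
  convert h2 using 1
  push_cast
  ring

lemma gf_deriv_neg {t : ℝ} (ht : 0 < t) :
    2 * t - 4 / Real.sqrt (2 * Real.pi) * f t / PhiBar t < 0 := by
  have hc := cpos
  have hB := B_pos ht.le
  rw [sub_neg, lt_div_iff₀ hB, PhiBar_eq_tail ht.le]
  have h1 := T_mul_lt t ht
  have h2 : f t = Real.exp (-t ^ 2 / 2) := rfl
  rw [← h2] at h1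
  have h3 : 0 < 4 / Real.sqrt (2 * Real.pi) := by positivity
  calc 2 * t * (2 / Real.sqrt (2 * Real.pi) * T t)
      = 4 / Real.sqrt (2 * Real.pi) * (T t * t) := by ring
    _ < 4 / Real.sqrt (2 * Real.pi) * f t := by
        exact mul_lt_mul_of_pos_left h1 h3

lemma hasDerivAt_hf {t : ℝ} (ht : 0 ≤ t) :
    HasDerivAt hf (2 / Real.sqrt (2 * Real.pi) * f t * gf t) t := by
  have hc := cpos
  have hB := hasDerivAt_PhiBar t
  have hBpos := B_pos ht
  have hlog := hB.log hBpos.ne'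
  have hterm1 := (hlog.const_mul (-2)).mul hB
  have hterm2 := (((hasDerivAt_id t).const_mul (2:ℝ)).mul (hasDerivAt_exp_part t)).div_const
    (Real.sqrt (2 * Real.pi))
  have h : HasDerivAt (fun u => -2 * Real.log (PhiBar u) * PhiBar u
      - 2 * u * Real.exp (-u ^ 2 / 2) / Real.sqrt (2 * Real.pi)) _ t := hterm1.sub hterm2
  have hfeq : hf = fun u => -2 * Real.log (PhiBar u) * PhiBar u
      - 2 * u * Real.exp (-u ^ 2 / 2) / Real.sqrt (2 * Real.pi) := rfl
  rw [hfeq]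
  convert h using 1
  have h2 : f t = Real.exp (-t ^ 2 / 2) := rfl
  rw [gf]
  simp only [id_eq, ← h2]
  field_simp
  ring

lemma f_tendsto : Tendsto f atTop (𝓝 0) := by
  apply Real.tendsto_exp_atBot.comp
  have h1 : Tendsto (fun y : ℝ => y ^ 2 / 2) atTop atTop :=
    (tendsto_pow_atTop two_ne_zero).atTop_div_const (by norm_num)
  have h2 := tendsto_neg_atTop_atBot.comp h1
  exact h2.congr fun y => by simp [f, neg_div]

lemma B_tendsto : Tendsto PhiBar atTop (𝓝 0) := by
  have hc := cpos
  apply squeeze_zero' (g := fun t => 2 / Real.sqrt (2 * Real.pi) * f t)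
  · filter_upwards [eventually_ge_atTop (0:ℝ)] with t htt
    exact (B_pos htt).le
  · filter_upwards [eventually_ge_atTop (1:ℝ)] with t htt
    have ht : (0:ℝ) < t := by linarith
    rw [PhiBar_eq_tail ht.le]
    have h1 := T_mul_lt t ht
    have h2 : T t ≤ T t * t := by nlinarith [(T_pos t).le]
    have h3 : T t ≤ f t := by
      have : f t = Real.exp (-t ^ 2 / 2) := rfl
      rw [this]; linarith
    have h4 : 0 < 2 / Real.sqrt (2 * Real.pi) := by positivity
    exact mul_le_mul_of_nonneg_left h3 h4.le
  · have := f_tendsto.const_mul (2 / Real.sqrt (2 * Real.pi))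
    simpa using this

lemma neg_mul_log_le {x : ℝ} (hx : 0 < x) (hx1 : x ≤ 1) :
    -2 * Real.log x * x ≤ 4 * Real.sqrt x := by
  set s := Real.sqrt x with hs
  have hspos : 0 < s := Real.sqrt_pos.2 hx
  have hss : s * s = x := Real.mul_self_sqrt hx.le
  have hlog : Real.log x = 2 * Real.log s := by
    rw [← hss, Real.log_mul hspos.ne' hspos.ne']; ring
  have hinv : Real.log s⁻¹ ≤ s⁻¹ - 1 := Real.log_le_sub_one_of_pos (by positivity)
  rw [Real.log_inv] at hinv
  have h1 : -Real.log x ≤ 2 * s⁻¹ := by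
    rw [hlog]
    have : s⁻¹ - 1 ≤ s⁻¹ := by linarith
    nlinarith [hinv]
  have h2 : -2 * Real.log x * x = 2 * (-Real.log x) * x := by ring
  rw [h2]
  have hlx : 0 ≤ -Real.log x := by
    have := Real.log_nonpos hx.le hx1
    linarith
  have h3 : 2 * (-Real.log x) * x ≤ 2 * (2 * s⁻¹) * x := by
    have := mul_le_mul_of_nonneg_right (mul_le_mul_of_nonneg_left h1 (by norm_num : (0:ℝ) ≤ 2)) hx.le
    linarith [this]
  have h4 : 2 * (2 * s⁻¹) * x = 4 * s := by
    rw [← hss]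
    field_simp
    ring
  linarith

lemma hf_tendsto : Tendsto hf atTop (𝓝 0) := by
  have hc := cpos
  have hterm1 : Tendsto (fun t => -2 * Real.log (PhiBar t) * PhiBar t) atTop (𝓝 0) := by
    apply squeeze_zero' (g := fun t => 4 * Real.sqrt (PhiBar t))
    · filter_upwards [eventually_ge_atTop (1:ℝ)] with t htt
      have ht : (0:ℝ) < t := by linarith
      have h1 := B_pos ht.le
      have h2 := B_lt_one ht
      have h3 := Real.log_nonpos h1.le h2.le
      nlinarith
    · filter_upwards [eventually_ge_atTop (1:ℝ)] with t htt
      have ht : (0:ℝ) < t := by linarith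
      exact neg_mul_log_le (B_pos ht.le) (B_lt_one ht).le
    · have hsq : Tendsto (fun t => Real.sqrt (PhiBar t)) atTop (𝓝 0) := by
        have := (Real.continuous_sqrt.tendsto 0).comp B_tendsto
        simpa [Function.comp_def] using this
      have := hsq.const_mul (4:ℝ)
      simpa using this
  have hterm2 : Tendsto (fun t : ℝ => 2 * t * Real.exp (-t ^ 2 / 2)
      / Real.sqrt (2 * Real.pi)) atTop (𝓝 0) := by
    apply squeeze_zero' (g := fun t => 2 / Real.sqrt (2 * Real.pi) * (t * Real.exp (-t)))
    · filter_upwards [eventually_ge_atTop (0:ℝ)] with t htt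
      positivity
    · filter_upwards [eventually_ge_atTop (2:ℝ)] with t htt
      have h1 : Real.exp (-t ^ 2 / 2) ≤ Real.exp (-t) := by
        apply Real.exp_le_exp.2
        nlinarith
      have h2 : (0:ℝ) ≤ t := by linarith
      rw [div_le_iff₀ hc] at *
      calc 2 * t * Real.exp (-t ^ 2 / 2) ≤ 2 * t * Real.exp (-t) :=
            mul_le_mul_of_nonneg_left h1 (by linarith)
        _ = 2 / Real.sqrt (2 * Real.pi) * (t * Real.exp (-t)) * Real.sqrt (2 * Real.pi) := by
            field_simp
    · have h0 : Tendsto (fun t : ℝ => t * Real.exp (-t)) atTop (𝓝 0) := by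
        have := tendsto_pow_mul_exp_neg_atTop_nhds_zero 1
        simpa using this
      have := h0.const_mul (2 / Real.sqrt (2 * Real.pi))
      simpa using this
  have h := hterm1.sub hterm2
  simp only [sub_zero] at h
  exact h

lemma hf_zero : hf 0 = 0 := by
  rw [hf, PhiBar_zero]
  simp

lemma gf_strictAnti : StrictAntiOn gf (Ici 0) := by
  apply strictAntiOn_of_deriv_neg (convex_Ici 0)
  · exact fun x hx => ((hasDerivAt_gf hx).continuousAt).continuousWithinAt
  · intro x hx
    rw [interior_Ici] at hx
    rw [(hasDerivAt_gf (le_of_lt hx)).deriv]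
    exact gf_deriv_neg hx

lemma hf_pos {t : ℝ} (ht : 0 < t) : 0 < hf t := by
  have hc := cpos
  by_cases hg : 0 ≤ gf t
  · have hmono : StrictMonoOn hf (Icc 0 t) := by
      apply strictMonoOn_of_deriv_pos (convex_Icc 0 t)
      · exact fun x hx => ((hasDerivAt_hf hx.1).continuousAt).continuousWithinAt
      · intro x hx
        rw [interior_Icc] at hx
        rw [(hasDerivAt_hf hx.1.le).deriv]
        have hgx : gf t < gf x := gf_strictAnti (le_of_lt hx.1) ht.le hx.2
        have : 0 < gf x := lt_of_le_of_lt hg hgx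
        have hfx := f_pos x
        positivity
    have := hmono (left_mem_Icc.2 ht.le) (right_mem_Icc.2 ht.le) ht
    rwa [hf_zero] at this
  · push_neg at hg
    have hanti : StrictAntiOn hf (Ici t) := by
      apply strictAntiOn_of_deriv_neg (convex_Ici t)
      · exact fun x hx => ((hasDerivAt_hf (le_trans ht.le hx)).continuousAt).continuousWithinAt
      · intro x hx
        rw [interior_Ici] at hx
        rw [(hasDerivAt_hf (le_trans ht.le hx.le)).deriv]
        have hgx : gf x < gf t := gf_strictAnti ht.le (le_trans ht.le hx.le) hx
        have hneg : gf x < 0 := lt_trans hgx hg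
        have hfx := f_pos x
        have hpos : 0 < 2 / Real.sqrt (2 * Real.pi) * f x := by positivity
        nlinarith
    have h1 : hf (t + 1) < hf t :=
      hanti (mem_Ici.2 le_rfl) (mem_Ici.2 (by linarith)) (lt_add_one t)
    have h2 : 0 ≤ hf (t + 1) := by
      apply le_of_tendsto hf_tendsto
      filter_upwards [eventually_ge_atTop (t + 1)] with s hs
      rcases eq_or_lt_of_le hs with rfl | hlt
      · exact le_rfl
      · exact (hanti (mem_Ici.2 (by linarith)) (mem_Ici.2 (by linarith)) hlt).le
    linarith

end PhiAux

theorem phiBar_log_ineq (t : ℝ) (ht : 0 < t) :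
    -2 * Real.log (PhiBar t) * PhiBar t
      - 2 * t * Real.exp (-t ^ 2 / 2) / Real.sqrt (2 * Real.pi) > 0 :=
  PhiAux.hf_pos ht
end

section
/- The function x ↦ −x·log(x)/(1−x) is strictly increasing on the interval (0,1). -/
theorem strictMonoOn_x_rho :
    StrictMonoOn (fun x : ℝ => -x * Real.log x / (1 - x)) (Set.Ioo 0 1) := by
  have key : ∀ x ∈ Set.Ioo (0:ℝ) 1,
      HasDerivAt (fun x : ℝ => -x * Real.log x / (1 - x))
        ((x - 1 - Real.log x) / (1 - x) ^ 2) x := by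
    intro x hx
    obtain ⟨hx0, hx1⟩ := hx
    have hne : 1 - x ≠ 0 := by linarith
    have h1 : HasDerivAt (fun x : ℝ => -x * Real.log x) (-(Real.log x + 1)) x := by
      have := ((hasDerivAt_id x).mul (Real.hasDerivAt_log (ne_of_gt hx0))).neg
      convert this using 1
      · rfl
      · rfl
      · ext y; simp [id]
      · simp [id, ne_of_gt hx0]
    have h2 : HasDerivAt (fun x : ℝ => 1 - x) (-1) x := by
      simpa using (hasDerivAt_id x).const_sub 1
    have := h1.div h2 hne
    convert this using 1
    · rfl
    · rfl
    · rfl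
    field_simp
    ring
  apply strictMonoOn_of_hasDerivWithinAt_pos (convex_Ioo 0 1)
    (fun x hx => ((key x hx).continuousAt.continuousWithinAt))
    (fun x hx => ((key x (by simpa using interior_subset (s := Set.Ioo 0 1) hx)).hasDerivWithinAt))
  intro x hx
  rw [interior_Ioo] at hx
  obtain ⟨hx0, hx1⟩ := hx
  have hlog : Real.log x < x - 1 := Real.log_lt_sub_one_of_pos hx0 (by linarith)
  have hsq : (0:ℝ) < (1 - x) ^ 2 := pow_pos (by linarith) 2
  apply div_pos (by linarith) hsq
end

section
/- There exists a real number β₀ with 1.263282 < β₀ < 1.263283 such that sup_{t ≥ 0} 2·Φ(β₀·t)·e^{-t²/2} = 1. -/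
set_option maxHeartbeats 2000000

/-- `g β = sup_{t ≥ 0} 2 Φ(β t) e^{-t²/2}`. -/
noncomputable def g (β : ℝ) : ℝ :=
  sSup ((fun t : ℝ => 2 * Phi (β * t) * Real.exp (-t ^ 2 / 2)) '' Set.Ici 0)

open Real MeasureTheory

/- ### polynomial definitions -/
noncomputable def PP (u : ℝ) : ℝ := (1/1)*u^1 + (-1/6)*u^3 + (1/40)*u^5 + (-1/336)*u^7 + (1/3456)*u^9 + (-1/42240)*u^11 + (1/599040)*u^13 + (-1/9676800)*u^15 + (1/175472640)*u^17 + (-1/3530096640)*u^19 + (1/78033715200)*u^21 + (-1/1880240947200)*u^23 + (1/49049763840000)*u^25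
noncomputable def PL (u : ℝ) : ℝ := (1/1)*u^1 + (-1/6)*u^3 + (1/40)*u^5 + (-1/336)*u^7 + (1/3456)*u^9 + (-1/42240)*u^11 + (1/599040)*u^13 + (-1/9676800)*u^15 + (1/175472640)*u^17 + (-1/3530096640)*u^19 + (1/78033715200)*u^21 + (-1/1880240947200)*u^23
noncomputable def QQ (t : ℝ) : ℝ := (1/1) + (1/2)*t^2 + (1/8)*t^4 + (1/48)*t^6 + (1/384)*t^8 + (1/3840)*t^10 + (1/46080)*t^12 + (1/645120)*t^14 + (1/10321920)*t^16 + (1/185794560)*t^18 + (1/3715891200)*t^20 + (1/81749606400)*t^22 + (1/1961990553600)*t^24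
noncomputable def Pxd (x : ℝ) : ℝ := (1/1) + (-1/2)*x^2 + (1/8)*x^4 + (-1/48)*x^6 + (1/384)*x^8 + (-1/3840)*x^10 + (1/46080)*x^12 + (-1/645120)*x^14 + (1/10321920)*x^16 + (-1/185794560)*x^18 + (1/3715891200)*x^20 + (-1/81749606400)*x^22 + (1/1961990553600)*x^24
noncomputable def Plxd (x : ℝ) : ℝ := (1/1) + (-1/2)*x^2 + (1/8)*x^4 + (-1/48)*x^6 + (1/384)*x^8 + (-1/3840)*x^10 + (1/46080)*x^12 + (-1/645120)*x^14 + (1/10321920)*x^16 + (-1/185794560)*x^18 + (1/3715891200)*x^20 + (-1/81749606400)*x^22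

/- ### gaussian integrand basics -/
lemma integrable_gauss : Integrable (fun x : ℝ => Real.exp (-x ^ 2 / 2)) := by
  have h := integrable_exp_neg_mul_sq (b := (1:ℝ)/2) (by norm_num)
  have e : (fun x : ℝ => Real.exp (-x ^ 2 / 2)) = fun x : ℝ => Real.exp (-(1/2)*x^2) := by
    funext x; congr 1; ring
  rw [e]; exact h

lemma int_gauss : (∫ x : ℝ, Real.exp (-x ^ 2 / 2)) = Real.sqrt (2*π) := by
  have h := integral_gaussian (1/2)
  have e : (fun x : ℝ => Real.exp (-(1/2)*x^2)) = fun x : ℝ => Real.exp (-x ^ 2 / 2) := by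
    funext x; congr 1; ring
  rw [e] at h; rw [h]; congr 1; ring

lemma ii_gauss (u v : ℝ) : IntervalIntegrable (fun x : ℝ => Real.exp (-x ^ 2 / 2)) volume u v := by
  apply Continuous.intervalIntegrable; fun_prop

lemma ii_Pxd (u v : ℝ) : IntervalIntegrable Pxd volume u v := by
  apply Continuous.intervalIntegrable; unfold Pxd; fun_prop

lemma ii_Plxd (u v : ℝ) : IntervalIntegrable Plxd volume u v := by
  apply Continuous.intervalIntegrable; unfold Plxd; fun_prop

lemma I_nonneg (u : ℝ) (hu : 0 ≤ u) : 0 ≤ ∫ x in (-u)..u, Real.exp (-x ^ 2 / 2) :=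
  intervalIntegral.integral_nonneg (by linarith) (fun x _ => (Real.exp_pos _).le)

lemma I_le_sqrt (u : ℝ) (hu : 0 ≤ u) : (∫ x in (-u)..u, Real.exp (-x ^ 2 / 2)) ≤ Real.sqrt (2*π) := by
  rw [intervalIntegral.integral_of_le (by linarith), ← int_gauss]
  exact setIntegral_le_integral integrable_gauss (Filter.Eventually.of_forall fun x => (Real.exp_pos _).le)

lemma I_mono {u v : ℝ} (hu : 0 ≤ u) (huv : u ≤ v) :
    (∫ x in (-u)..u, Real.exp (-x ^ 2 / 2)) ≤ ∫ x in (-v)..v, Real.exp (-x ^ 2 / 2) := by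
  rw [intervalIntegral.integral_of_le (by linarith), intervalIntegral.integral_of_le (by linarith)]
  exact setIntegral_mono_set integrable_gauss.integrableOn
    (Filter.Eventually.of_forall fun x => (Real.exp_pos _).le)
    ((Set.Ioc_subset_Ioc (by linarith) huv).eventuallyLE)

lemma I_lip {u v : ℝ} (hu : 0 ≤ u) (huv : u ≤ v) :
    (∫ x in (-v)..v, Real.exp (-x ^ 2 / 2)) ≤ (∫ x in (-u)..u, Real.exp (-x ^ 2 / 2)) + 2*(v - u) := by
  have s1 := intervalIntegral.integral_add_adjacent_intervals (ii_gauss (-v) (-u)) (ii_gauss (-u) v)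
  have s2 := intervalIntegral.integral_add_adjacent_intervals (ii_gauss (-u) u) (ii_gauss u v)
  have hb : ∀ w z : ℝ, w ≤ z → (∫ x in w..z, Real.exp (-x ^ 2 / 2)) ≤ z - w := by
    intro w z hwz
    have h1 : (∫ x in w..z, Real.exp (-x ^ 2 / 2)) ≤ ∫ x in w..z, (1:ℝ) := by
      apply intervalIntegral.integral_mono_on hwz (ii_gauss _ _) intervalIntegrable_const
      intro x _
      rw [show (1:ℝ) = Real.exp 0 by simp]
      apply Real.exp_le_exp.mpr; nlinarith [sq_nonneg x]
    simpa using h1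
  have b1 := hb (-v) (-u) (by linarith)
  have b3 := hb u v huv
  linarith

/- ### Phi basics -/
lemma Phi_eq (u : ℝ) : Phi u = (1 / Real.sqrt (2*π)) * ∫ x in (-u)..u, Real.exp (-x ^ 2 / 2) := rfl

lemma sqrt2pi_pos : 0 < Real.sqrt (2*π) := Real.sqrt_pos.mpr (by positivity)

lemma Phi_nonneg (u : ℝ) (hu : 0 ≤ u) : 0 ≤ Phi u := by
  rw [Phi_eq]; exact mul_nonneg (by positivity) (I_nonneg u hu)

lemma Phi_le_one (u : ℝ) (hu : 0 ≤ u) : Phi u ≤ 1 := by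
  rw [Phi_eq]
  have h := I_le_sqrt u hu
  have h2 := mul_le_mul_of_nonneg_left h (show (0:ℝ) ≤ 1 / Real.sqrt (2*π) by positivity)
  rw [show 1 / Real.sqrt (2*π) * Real.sqrt (2*π) = 1 from by field_simp] at h2
  exact h2

lemma Phi_mono {u v : ℝ} (hu : 0 ≤ u) (huv : u ≤ v) : Phi u ≤ Phi v := by
  rw [Phi_eq, Phi_eq]
  exact mul_le_mul_of_nonneg_left (I_mono hu huv) (by positivity)

/- ### series bounds for exp -/
lemma QQ_le_exp (t : ℝ) : QQ t ≤ Real.exp (t^2/2) := by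
  have h := Real.sum_le_exp_of_nonneg (x := t^2/2) (by positivity) 13
  simp [Finset.sum_range_succ, Nat.factorial] at h
  unfold QQ; linarith [h]

lemma QQ_pos (t : ℝ) : 0 < QQ t := by unfold QQ; positivity

lemma kernel_up (x : ℝ) : Real.exp (-x ^ 2 / 2) ≤ Pxd x := by
  have hQ : ((1/1) + (1/2)*x^2 + (1/8)*x^4 + (1/48)*x^6 + (1/384)*x^8 + (1/3840)*x^10 + (1/46080)*x^12 + (1/645120)*x^14 + (1/10321920)*x^16 + (1/185794560)*x^18 + (1/3715891200)*x^20 + (1/81749606400)*x^22 + (1/1961990553600)*x^24 + (1/51011754393600)*x^26 + (1/1428329123020800)*x^28 + (1/42849873690624000)*x^30 + (1/1371195958099968000)*x^32) ≤ Real.exp (x^2/2) := by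
    have h := Real.sum_le_exp_of_nonneg (x := x^2/2) (by positivity) 17
    simp [Finset.sum_range_succ, Nat.factorial] at h
    linarith [h]
  have hQpos : (0:ℝ) < (1/1) + (1/2)*x^2 + (1/8)*x^4 + (1/48)*x^6 + (1/384)*x^8 + (1/3840)*x^10 + (1/46080)*x^12 + (1/645120)*x^14 + (1/10321920)*x^16 + (1/185794560)*x^18 + (1/3715891200)*x^20 + (1/81749606400)*x^22 + (1/1961990553600)*x^24 + (1/51011754393600)*x^26 + (1/1428329123020800)*x^28 + (1/42849873690624000)*x^30 + (1/1371195958099968000)*x^32 := by positivity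
  have hkey : Pxd x * ((1/1) + (1/2)*x^2 + (1/8)*x^4 + (1/48)*x^6 + (1/384)*x^8 + (1/3840)*x^10 + (1/46080)*x^12 + (1/645120)*x^14 + (1/10321920)*x^16 + (1/185794560)*x^18 + (1/3715891200)*x^20 + (1/81749606400)*x^22 + (1/1961990553600)*x^24 + (1/51011754393600)*x^26 + (1/1428329123020800)*x^28 + (1/42849873690624000)*x^30 + (1/1371195958099968000)*x^32) = 1 + ((1/51011754393600)*x^26 + (1/109871471001600)*x^28 + (1/470877732864000)*x^30 + (1/3013617490329600)*x^32 + (107/2742391916199936000)*x^34 + (73/19745221796639539200)*x^36 + (19/65817405988798464000)*x^38 + (53/2632696239551938560000)*x^40 + (1/884585936489451356160)*x^42 + (139/2085095421725135339520000)*x^44 + (1/379108258495479152640000)*x^46 + (43/280236824679858189631488000)*x^48 + (53/14011841233992909481574400000)*x^50 + (1/3736490995731442528419840000)*x^52 + (1/336284189615829827557785600000)*x^54 + (1/2690273516926638620462284800000)*x^56) := by unfold Pxd; ring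
  have hS1 : (0:ℝ) ≤ (1/51011754393600)*x^26 + (1/109871471001600)*x^28 + (1/470877732864000)*x^30 + (1/3013617490329600)*x^32 + (107/2742391916199936000)*x^34 + (73/19745221796639539200)*x^36 + (19/65817405988798464000)*x^38 + (53/2632696239551938560000)*x^40 + (1/884585936489451356160)*x^42 + (139/2085095421725135339520000)*x^44 + (1/379108258495479152640000)*x^46 + (43/280236824679858189631488000)*x^48 + (53/14011841233992909481574400000)*x^50 + (1/3736490995731442528419840000)*x^52 + (1/336284189615829827557785600000)*x^54 + (1/2690273516926638620462284800000)*x^56 := by positivity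
  have hPQ : 1 ≤ Pxd x * ((1/1) + (1/2)*x^2 + (1/8)*x^4 + (1/48)*x^6 + (1/384)*x^8 + (1/3840)*x^10 + (1/46080)*x^12 + (1/645120)*x^14 + (1/10321920)*x^16 + (1/185794560)*x^18 + (1/3715891200)*x^20 + (1/81749606400)*x^22 + (1/1961990553600)*x^24 + (1/51011754393600)*x^26 + (1/1428329123020800)*x^28 + (1/42849873690624000)*x^30 + (1/1371195958099968000)*x^32) := by rw [hkey]; linarith
  have h1 : 1 / ((1/1) + (1/2)*x^2 + (1/8)*x^4 + (1/48)*x^6 + (1/384)*x^8 + (1/3840)*x^10 + (1/46080)*x^12 + (1/645120)*x^14 + (1/10321920)*x^16 + (1/185794560)*x^18 + (1/3715891200)*x^20 + (1/81749606400)*x^22 + (1/1961990553600)*x^24 + (1/51011754393600)*x^26 + (1/1428329123020800)*x^28 + (1/42849873690624000)*x^30 + (1/1371195958099968000)*x^32) ≤ Pxd x := by rw [div_le_iff₀ hQpos]; linarith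
  have h2 : 1 / Real.exp (x^2/2) ≤ 1 / ((1/1) + (1/2)*x^2 + (1/8)*x^4 + (1/48)*x^6 + (1/384)*x^8 + (1/3840)*x^10 + (1/46080)*x^12 + (1/645120)*x^14 + (1/10321920)*x^16 + (1/185794560)*x^18 + (1/3715891200)*x^20 + (1/81749606400)*x^22 + (1/1961990553600)*x^24 + (1/51011754393600)*x^26 + (1/1428329123020800)*x^28 + (1/42849873690624000)*x^30 + (1/1371195958099968000)*x^32) := one_div_le_one_div_of_le hQpos hQ
  have h3 : Real.exp (-x ^ 2 / 2) = 1 / Real.exp (x^2/2) := by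
    rw [show (-x ^ 2 / 2 : ℝ) = -(x^2/2) by ring, Real.exp_neg, one_div]
  rw [h3]; linarith

lemma Plxd_nonneg (x : ℝ) (hx : x^2 ≤ 2) : 0 ≤ Plxd x := by
  have hid : Plxd x = ((1/1) * x^0) * (1 - x^2/2) + ((1/8) * x^4) * (1 - x^2/6) + ((1/384) * x^8) * (1 - x^2/10) + ((1/46080) * x^12) * (1 - x^2/14) + ((1/10321920) * x^16) * (1 - x^2/18) + ((1/3715891200) * x^20) * (1 - x^2/22) := by unfold Plxd; ring
  have hpr0 : (0:ℝ) ≤ ((1/1) * x^0) * (1 - x^2/2) := mul_nonneg (by positivity) (by nlinarith)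
  have hpr1 : (0:ℝ) ≤ ((1/8) * x^4) * (1 - x^2/6) := mul_nonneg (by positivity) (by nlinarith)
  have hpr2 : (0:ℝ) ≤ ((1/384) * x^8) * (1 - x^2/10) := mul_nonneg (by positivity) (by nlinarith)
  have hpr3 : (0:ℝ) ≤ ((1/46080) * x^12) * (1 - x^2/14) := mul_nonneg (by positivity) (by nlinarith)
  have hpr4 : (0:ℝ) ≤ ((1/10321920) * x^16) * (1 - x^2/18) := mul_nonneg (by positivity) (by nlinarith)
  have hpr5 : (0:ℝ) ≤ ((1/3715891200) * x^20) * (1 - x^2/22) := mul_nonneg (by positivity) (by nlinarith)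
  rw [hid]; linarith

lemma kernel_low (x : ℝ) (hx : x^2 ≤ 2) : Plxd x ≤ Real.exp (-x ^ 2 / 2) := by
  have hE : Real.exp (x^2/2) ≤ ((1/1) + (1/2)*x^2 + (1/8)*x^4 + (1/48)*x^6 + (1/384)*x^8 + (1/3840)*x^10 + (1/46080)*x^12 + (1/645120)*x^14 + (1/10321920)*x^16 + (1/185794560)*x^18 + (1/3715891200)*x^20 + (1/81749606400)*x^22 + (1/1961990553600)*x^24 + (1/51011754393600)*x^26 + (1/1428329123020800)*x^28 + (1/42849873690624000)*x^30 + (17/21939135329599488000)*x^32) := by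
    have h := Real.exp_bound' (x := x^2/2) (by positivity) (by linarith) (n := 16) (by norm_num)
    simp [Finset.sum_range_succ, Nat.factorial] at h
    linarith [h]
  have hQpos : (0:ℝ) < (1/1) + (1/2)*x^2 + (1/8)*x^4 + (1/48)*x^6 + (1/384)*x^8 + (1/3840)*x^10 + (1/46080)*x^12 + (1/645120)*x^14 + (1/10321920)*x^16 + (1/185794560)*x^18 + (1/3715891200)*x^20 + (1/81749606400)*x^22 + (1/1961990553600)*x^24 + (1/51011754393600)*x^26 + (1/1428329123020800)*x^28 + (1/42849873690624000)*x^30 + (17/21939135329599488000)*x^32 := by positivity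
  have hkey : Plxd x * ((1/1) + (1/2)*x^2 + (1/8)*x^4 + (1/48)*x^6 + (1/384)*x^8 + (1/3840)*x^10 + (1/46080)*x^12 + (1/645120)*x^14 + (1/10321920)*x^16 + (1/185794560)*x^18 + (1/3715891200)*x^20 + (1/81749606400)*x^22 + (1/1961990553600)*x^24 + (1/51011754393600)*x^26 + (1/1428329123020800)*x^28 + (1/42849873690624000)*x^30 + (17/21939135329599488000)*x^32) = 1 - ((1/1961990553600)*x^24 + (1/4250979532800)*x^26 + (1/18311911833600)*x^28 + (1/117719433216000)*x^30 + (21839/21939135329599488000)*x^32 + (457/4875363406577664000)*x^34 + (11623/1579617743731163136000)*x^36 + (529/1053078495820775424000)*x^38 + (409/14041046610943672320000)*x^40 + (8623/5307515618936708136960000)*x^42 + (773/11120508915867388477440000)*x^44 + (571/155687124822143438684160000)*x^46 + (457/4483789194877731034103808000)*x^48 + (1447/224189459743886551705190400000)*x^50 + (23/298919279658515402273587200000)*x^52 + (17/1793515677951092413641523200000)*x^54) := by unfold Plxd; ring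
  have hS2 : (0:ℝ) ≤ (1/1961990553600)*x^24 + (1/4250979532800)*x^26 + (1/18311911833600)*x^28 + (1/117719433216000)*x^30 + (21839/21939135329599488000)*x^32 + (457/4875363406577664000)*x^34 + (11623/1579617743731163136000)*x^36 + (529/1053078495820775424000)*x^38 + (409/14041046610943672320000)*x^40 + (8623/5307515618936708136960000)*x^42 + (773/11120508915867388477440000)*x^44 + (571/155687124822143438684160000)*x^46 + (457/4483789194877731034103808000)*x^48 + (1447/224189459743886551705190400000)*x^50 + (23/298919279658515402273587200000)*x^52 + (17/1793515677951092413641523200000)*x^54 := by positivity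
  have hPQ : Plxd x * ((1/1) + (1/2)*x^2 + (1/8)*x^4 + (1/48)*x^6 + (1/384)*x^8 + (1/3840)*x^10 + (1/46080)*x^12 + (1/645120)*x^14 + (1/10321920)*x^16 + (1/185794560)*x^18 + (1/3715891200)*x^20 + (1/81749606400)*x^22 + (1/1961990553600)*x^24 + (1/51011754393600)*x^26 + (1/1428329123020800)*x^28 + (1/42849873690624000)*x^30 + (17/21939135329599488000)*x^32) ≤ 1 := by rw [hkey]; linarith
  have h1 : Plxd x ≤ 1 / ((1/1) + (1/2)*x^2 + (1/8)*x^4 + (1/48)*x^6 + (1/384)*x^8 + (1/3840)*x^10 + (1/46080)*x^12 + (1/645120)*x^14 + (1/10321920)*x^16 + (1/185794560)*x^18 + (1/3715891200)*x^20 + (1/81749606400)*x^22 + (1/1961990553600)*x^24 + (1/51011754393600)*x^26 + (1/1428329123020800)*x^28 + (1/42849873690624000)*x^30 + (17/21939135329599488000)*x^32) := by rw [le_div_iff₀ hQpos]; linarith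
  have h2 : 1 / ((1/1) + (1/2)*x^2 + (1/8)*x^4 + (1/48)*x^6 + (1/384)*x^8 + (1/3840)*x^10 + (1/46080)*x^12 + (1/645120)*x^14 + (1/10321920)*x^16 + (1/185794560)*x^18 + (1/3715891200)*x^20 + (1/81749606400)*x^22 + (1/1961990553600)*x^24 + (1/51011754393600)*x^26 + (1/1428329123020800)*x^28 + (1/42849873690624000)*x^30 + (17/21939135329599488000)*x^32) ≤ 1 / Real.exp (x^2/2) := one_div_le_one_div_of_le (Real.exp_pos _) hE
  have h3 : Real.exp (-x ^ 2 / 2) = 1 / Real.exp (x^2/2) := by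
    rw [show (-x ^ 2 / 2 : ℝ) = -(x^2/2) by ring, Real.exp_neg, one_div]
  rw [h3]; linarith

/- ### FTC for the polynomials -/
lemma intPxd (u : ℝ) : (∫ x in (-u)..u, Pxd x) = 2 * PP u := by
  have hd : ∀ x ∈ Set.uIcc (-u) u, HasDerivAt PP (Pxd x) x := by
    intro x _
    exact (((((((((((((((hasDerivAt_pow 1 x).const_mul ((1/1) : ℝ)).add ((hasDerivAt_pow 3 x).const_mul ((-1/6) : ℝ))).add ((hasDerivAt_pow 5 x).const_mul ((1/40) : ℝ))).add ((hasDerivAt_pow 7 x).const_mul ((-1/336) : ℝ))).add ((hasDerivAt_pow 9 x).const_mul ((1/3456) : ℝ))).add ((hasDerivAt_pow 11 x).const_mul ((-1/42240) : ℝ))).add ((hasDerivAt_pow 13 x).const_mul ((1/599040) : ℝ))).add ((hasDerivAt_pow 15 x).const_mul ((-1/9676800) : ℝ))).add ((hasDerivAt_pow 17 x).const_mul ((1/175472640) : ℝ))).add ((hasDerivAt_pow 19 x).const_mul ((-1/3530096640) : ℝ))).add ((hasDerivAt_pow 21 x).const_mul ((1/78033715200) : ℝ))).add ((hasDerivAt_pow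 23 x).const_mul ((-1/1880240947200) : ℝ))).add ((hasDerivAt_pow 25 x).const_mul ((1/49049763840000) : ℝ)))).congr_deriv (by unfold Pxd; push_cast; ring)
  rw [intervalIntegral.integral_eq_sub_of_hasDerivAt hd (ii_Pxd _ _)]
  unfold PP; ring

lemma intPlxd (u : ℝ) : (∫ x in (-u)..u, Plxd x) = 2 * PL u := by
  have hd : ∀ x ∈ Set.uIcc (-u) u, HasDerivAt PL (Plxd x) x := by
    intro x _
    exact ((((((((((((((hasDerivAt_pow 1 x).const_mul ((1/1) : ℝ)).add ((hasDerivAt_pow 3 x).const_mul ((-1/6) : ℝ))).add ((hasDerivAt_pow 5 x).const_mul ((1/40) : ℝ))).add ((hasDerivAt_pow 7 x).const_mul ((-1/336) : ℝ))).add ((hasDerivAt_pow 9 x).const_mul ((1/3456) : ℝ))).add ((hasDerivAt_pow 11 x).const_mul ((-1/42240) : ℝ))).add ((hasDerivAt_pow 13 x).const_mul ((1/599040) : ℝ))).add ((hasDerivAt_pow 15 x).const_mul ((-1/9676800) : ℝ))).add ((hasDerivAt_pow 17 x).const_mul ((1/175472640) : ℝ))).add ((hasDerivAt_pow 19 x).const_mul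 ((-1/3530096640) : ℝ))).add ((hasDerivAt_pow 21 x).const_mul ((1/78033715200) : ℝ))).add ((hasDerivAt_pow 23 x).const_mul ((-1/1880240947200) : ℝ)))).congr_deriv (by unfold Plxd; push_cast; ring)
  rw [intervalIntegral.integral_eq_sub_of_hasDerivAt hd (ii_Plxd _ _)]
  unfold PL; ring

lemma I_le_PP (u : ℝ) (hu : 0 ≤ u) : (∫ x in (-u)..u, Real.exp (-x ^ 2 / 2)) ≤ 2 * PP u := by
  rw [← intPxd u]
  exact intervalIntegral.integral_mono_on (by linarith) (ii_gauss _ _) (ii_Pxd _ _)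
    (fun x _ => kernel_up x)

lemma PL_le_I (u : ℝ) (hu : 0 ≤ u) (hu2 : u^2 ≤ 2) :
    2 * PL u ≤ ∫ x in (-u)..u, Real.exp (-x ^ 2 / 2) := by
  rw [← intPlxd u]
  apply intervalIntegral.integral_mono_on (by linarith) (ii_Plxd _ _) (ii_gauss _ _)
  intro x hx
  exact kernel_low x (by nlinarith [hx.1, hx.2])

/- ### the certified polynomial inequality -/
lemma cert_C (t : ℝ) (h0 : 0 ≤ t) (h1 : t ≤ 1178/1000) :
    4 * PP ((126328203/100000000) * t) ≤ (2506628274631000502/1000000000000000000) * QQ t := by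
  have hA : (0:ℝ) ≤ (378877914684753576156052213143634617918033602690229219294049136797853525251343853622233881841148141600771974343380251801300133850686185917943762865780619660341920345485174769282909876934429560324882354661142970637744506134016736709918685021689762076714562973184901792564202898303899884153191670877257532216663202404362742896953696894622150414472139318909945194937491994407347088190276913090224095706097262635214061136834683777/103623604051968000000000000000000000000000000000000000000000000000000000000000000000000000000000000000000000000000000000000000000000000000000000000000000000000000000000000000000000000000000000000000000000000000000000000000000000000000000000000000000000000000000000000000000000000000000000000000000000000000000000000000000000000000000000000000000000000000000000000000000000000000000000000000000000000000000000000000000000000000) + (1211148350510476859828706277745467751011685853018932055396597161233986227842286123560475082651369646123488332513858867643244039927500729044080284532166773873752404684167120313825369155578923673795047231160141220234630294582483679672408250327190927649522940126664896020282612090946622840231165559413054160561983648669130105021035046290305348841478942475141738532608846030802737658699836535405443752251782972524661155141/828988832415744000000000000000000000000000000000000000000000000000000000000000000000000000000000000000000000000000000000000000000000000000000000000000000000000000000000000000000000000000000000000000000000000000000000000000000000000000000000000000000000000000000000000000000000000000000000000000000000000000000000000000000000000000000000000000000000000000000000000000000000000000000000000000000000000000000000000000000)*t^1 + (3305190227711113191115602562041635686220874908204479633756762341431066237584398005210342856545923035566105139078990973944113968379124854887391918398013026361159972705286702563611396181207502661133053454862888754089051775696774181810729072316169104546318467161525131550164424072093706619972296588365655238767078504537972012038042264369881035564043591367523958023695319198975893979611062824103033294852934627/138164805402624000000000000000000000000000000000000000000000000000000000000000000000000000000000000000000000000000000000000000000000000000000000000000000000000000000000000000000000000000000000000000000000000000000000000000000000000000000000000000000000000000000000000000000000000000000000000000000000000000000000000000000000000000000000000000000000000000000000000000000000000000000000000000000000000000000000)*t^2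 + (-93529521950019358040362911041137872891340103804900990023969833092025811941572499574876447853730905699687933390356021303794706900021958043483983934699447462730553203836689692494188049471104096330770132365931946051110118587337106147690568110818545162822874697649486783339015186957590547566524155319318586884490703384616329527337229036531591733194651510122473358773995488099183503664708480085659699217/828988832415744000000000000000000000000000000000000000000000000000000000000000000000000000000000000000000000000000000000000000000000000000000000000000000000000000000000000000000000000000000000000000000000000000000000000000000000000000000000000000000000000000000000000000000000000000000000000000000000000000000000000000000000000000000000000000000000000000000000000000000000000000000000000000000000000)*t^3 + (6201579503761212729542829534881536869750250988771734065224186881255964523651467254972072685842000151252458069230791708960798651694517175683440398441078473840628247440590131242978768700629082523382829525603417928345765374515373468516658443439679353228462700712411053116704252058815764998900240096337697846311477465603632884050075864240005338223118026268304628276479933004913138486780895499/41449441620787200000000000000000000000000000000000000000000000000000000000000000000000000000000000000000000000000000000000000000000000000000000000000000000000000000000000000000000000000000000000000000000000000000000000000000000000000000000000000000000000000000000000000000000000000000000000000000000000000000000000000000000000000000000000000000000000000000000000000000000000000000000000000)*t^4 + (5219759702387268338979942826537058576100493356820572986108366604230476852834253862926017432254924739638007580202699809026272219600481964063177805888444969672532204597707063542148803434427636183314965952322704916688032227993355879373933647707096430040880124017105543267053697563569600174936159672798621938700917147715430136045607311748440295397768804557640027280630173300676372817/92109870268416000000000000000000000000000000000000000000000000000000000000000000000000000000000000000000000000000000000000000000000000000000000000000000000000000000000000000000000000000000000000000000000000000000000000000000000000000000000000000000000000000000000000000000000000000000000000000000000000000000000000000000000000000000000000000000000000000000000000000000000000000000)*t^5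 + (-306975971946412422312355916966369137579387627796612341068421369049149907523272382153661465564781566982781036239649560572213758041525187208689942538445338551698468524049280003911837976976119285737016012739441520131198963956017702873139447744054488118957010198199392917187177427703410524078489466708889688206952949819194868389128997576813742088364930501304459223098732203/59213488029696000000000000000000000000000000000000000000000000000000000000000000000000000000000000000000000000000000000000000000000000000000000000000000000000000000000000000000000000000000000000000000000000000000000000000000000000000000000000000000000000000000000000000000000000000000000000000000000000000000000000000000000000000000000000000000000000000000000000000000000)*t^6 + (-4991871690435342700658465433753574231975708521627979116408521431618140474682529158036680510266706262154813248687419801961950879272714213877715266568098331683138438600129658022676008538905256232920204604439688879768139901322174863182781988162144536963049735713733577169283979893918756742889468766025472458806586815734985986610020830311037763791047279146209130749/828988832415744000000000000000000000000000000000000000000000000000000000000000000000000000000000000000000000000000000000000000000000000000000000000000000000000000000000000000000000000000000000000000000000000000000000000000000000000000000000000000000000000000000000000000000000000000000000000000000000000000000000000000000000000000000000000000000000000000000000000)*t^7 + (43838593950523290632613004334304189629914536166235371937079582965328332234894868096624913378612839555580632393175503508555486985957744491166635912116749945854392546070562140583974961670815409769655160348766739578500893135532896503145667711888666080848614630596528408943563017237966713882188802275039748368714189696915710489987578374598853809370238713/17270600675328000000000000000000000000000000000000000000000000000000000000000000000000000000000000000000000000000000000000000000000000000000000000000000000000000000000000000000000000000000000000000000000000000000000000000000000000000000000000000000000000000000000000000000000000000000000000000000000000000000000000000000000000000000000000000000000000000)*t^8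 + (179233506222580836857447812673272057340399315299757951630615054342428168279423413307698494516069390092047729343147838438173162653107309846750988305709055915461408807015288969061299552856582421029277958354583204697204048986382629576191972901660266678785222114243434685568151288915549811134354894456615620837008887380893137459317545368578754121/165797766483148800000000000000000000000000000000000000000000000000000000000000000000000000000000000000000000000000000000000000000000000000000000000000000000000000000000000000000000000000000000000000000000000000000000000000000000000000000000000000000000000000000000000000000000000000000000000000000000000000000000000000000000000000000000000000000)*t^9 + (-5243263361821230740407964582462260032821241927843206323431172553703300436436244986724029505737553773950487210974056635626899732249038844931138042677983758539934633248455242470387097149444889780871834515067943126479907558931924095405015194140830137640195177680779684584971431361575838761643606209519490800393520937025778984591331433/37681310564352000000000000000000000000000000000000000000000000000000000000000000000000000000000000000000000000000000000000000000000000000000000000000000000000000000000000000000000000000000000000000000000000000000000000000000000000000000000000000000000000000000000000000000000000000000000000000000000000000000000000000000000000000000000)*t^10 + (-29473611127041745759326355120294758898147747149816247256553446899137615204932087030209431291509514499411491293826346273375138439999654738634088614180161455209935274323637329250715712840797833533628339505858479904226316251165565709777646255780295672633926667720557845374644377904356452693926301520064157418804009203261452707/276329610805248000000000000000000000000000000000000000000000000000000000000000000000000000000000000000000000000000000000000000000000000000000000000000000000000000000000000000000000000000000000000000000000000000000000000000000000000000000000000000000000000000000000000000000000000000000000000000000000000000000000000000000000000)*t^11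 + (393374371201481560159644423445953765183689994594178536465443925988035541824276413625819139107980208374023263985937188597527374350217763945938628605153249884827426821597285996266045002542478556723506381115871394440353223774355633466669120789948702559025217015017098584930810130362707091090589771696226208201629349/15942092931072000000000000000000000000000000000000000000000000000000000000000000000000000000000000000000000000000000000000000000000000000000000000000000000000000000000000000000000000000000000000000000000000000000000000000000000000000000000000000000000000000000000000000000000000000000000000000000000000000000000000000)*t^12 + (108592310423540439159324566937904892684654174397618147849898083787261272416901975142535611066661576429800817075932446175564793255603844993660076154553436936444402638948191999253438079547954400435557121068592579146240727157783541582399750461596653534218616121177060235562223200239555903438054324819392467/9109767389184000000000000000000000000000000000000000000000000000000000000000000000000000000000000000000000000000000000000000000000000000000000000000000000000000000000000000000000000000000000000000000000000000000000000000000000000000000000000000000000000000000000000000000000000000000000000000000000000000000)*t^13 + (-120542780660749507779584413588662944004315970131457962716199188846744409527557910281044072552179042732302664883311315515849330769500688222779436189899519471564040497870386982516386543503850111873798821855198360032937398362735563896472388990598604289481144191826185347266022532527820399020233/78726384844800000000000000000000000000000000000000000000000000000000000000000000000000000000000000000000000000000000000000000000000000000000000000000000000000000000000000000000000000000000000000000000000000000000000000000000000000000000000000000000000000000000000000000000000000000000000000000000)*t^14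 + (-64106009666365061170702422615400607472838342768535227944244845058046715451083465057231441691391361180636811673339247455511238891800153707639127333049809789309722512497630504048562430611434925414015324879069176368262469604517737816678074472011863633976469556003977957983538263342276841/63768371724288000000000000000000000000000000000000000000000000000000000000000000000000000000000000000000000000000000000000000000000000000000000000000000000000000000000000000000000000000000000000000000000000000000000000000000000000000000000000000000000000000000000000000000000000000000000000)*t^15 + (74727084383331154945706980301814705055766487818405500952973531599802382968395264833501828880099477358742780767681745538289472615508449001051858121210730184149945808853152861447578150351074030704813719031577576932894434698980283381928393702071118147733119573708230063584039/468885086208000000000000000000000000000000000000000000000000000000000000000000000000000000000000000000000000000000000000000000000000000000000000000000000000000000000000000000000000000000000000000000000000000000000000000000000000000000000000000000000000000000000000000000000000000)*t^16 + (105089836134573081046134120332405809881244705662202266554620427629414931970172136590665405974770251569145710104718832763820256433792078804258418409106291396555921856967999161376509659767340309839374656498313410857627168073857346736181240935269627336417803206767283/1250360229888000000000000000000000000000000000000000000000000000000000000000000000000000000000000000000000000000000000000000000000000000000000000000000000000000000000000000000000000000000000000000000000000000000000000000000000000000000000000000000000000000000000000000000)*t^17 + (-964622460824511939549211922951824231154198456718013924452888189350667161244397094028410560347673116773883835435857033673262438205430571817133325168191563721634883433264235043199162015686884123092966911362557906252631796492909931186711958117956798592633/98712649728000000000000000000000000000000000000000000000000000000000000000000000000000000000000000000000000000000000000000000000000000000000000000000000000000000000000000000000000000000000000000000000000000000000000000000000000000000000000000000000000000000000)*t^18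 + (-237146926417244496811727840415791363143209026008494627956551217446629413152230251816365823564199577788545415531170487802823207660398761554843526145994971398260910095324203688907311219952256727811646713650229969126966094989954975859429604644843/39485059891200000000000000000000000000000000000000000000000000000000000000000000000000000000000000000000000000000000000000000000000000000000000000000000000000000000000000000000000000000000000000000000000000000000000000000000000000000000000000000000000)*t^19 + (572294976493372205628316029685696956182393491808818159199579512183819312176041403747997377456971367194327516178966655070666900964548819667308201233623552122514400148831154230898420427461301005017393776175721235188681795443956863107/783433728000000000000000000000000000000000000000000000000000000000000000000000000000000000000000000000000000000000000000000000000000000000000000000000000000000000000000000000000000000000000000000000000000000000000000000000000000000000000000)*t^20 + (1035495181557410413821075287834559543134604550542900794178063386601751964700791962039821825518690534441374097231991844896469549603331688383548508794336794687206439842454604000573467195371332140221554869731706139537268204587/2563964928000000000000000000000000000000000000000000000000000000000000000000000000000000000000000000000000000000000000000000000000000000000000000000000000000000000000000000000000000000000000000000000000000000000000000000000000000000)*t^21 + (-2523804342880900247126190022900105551062635300666755192696556804810599802808379820041111241988119159091562686610024885339923107438967641816942925244031283958071500924626816076246176822521855009574006949034189401/55738368000000000000000000000000000000000000000000000000000000000000000000000000000000000000000000000000000000000000000000000000000000000000000000000000000000000000000000000000000000000000000000000000000000000000000000000)*t^22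 + (-141873631903955129253441881782978417900813626221458418654038400671537054760140402712420294315255843002159355474003585703840459630500522953948407136546394515289712840934970450690386800498158388781519401/5046272000000000000000000000000000000000000000000000000000000000000000000000000000000000000000000000000000000000000000000000000000000000000000000000000000000000000000000000000000000000000000000000000000000000000)*t^23 := by
    have hp3 : t^3 ≤ (1178/1000 : ℝ)^3 := pow_le_pow_left₀ h0 h1 3
    have hp6 : t^6 ≤ (1178/1000 : ℝ)^6 := pow_le_pow_left₀ h0 h1 6
    have hp7 : t^7 ≤ (1178/1000 : ℝ)^7 := pow_le_pow_left₀ h0 h1 7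
    have hp10 : t^10 ≤ (1178/1000 : ℝ)^10 := pow_le_pow_left₀ h0 h1 10
    have hp11 : t^11 ≤ (1178/1000 : ℝ)^11 := pow_le_pow_left₀ h0 h1 11
    have hp14 : t^14 ≤ (1178/1000 : ℝ)^14 := pow_le_pow_left₀ h0 h1 14
    have hp15 : t^15 ≤ (1178/1000 : ℝ)^15 := pow_le_pow_left₀ h0 h1 15
    have hp18 : t^18 ≤ (1178/1000 : ℝ)^18 := pow_le_pow_left₀ h0 h1 18
    have hp19 : t^19 ≤ (1178/1000 : ℝ)^19 := pow_le_pow_left₀ h0 h1 19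
    have hp22 : t^22 ≤ (1178/1000 : ℝ)^22 := pow_le_pow_left₀ h0 h1 22
    have hp23 : t^23 ≤ (1178/1000 : ℝ)^23 := pow_le_pow_left₀ h0 h1 23
    have hq1 : (0:ℝ) ≤ t^1 := pow_nonneg h0 1
    have hq2 : (0:ℝ) ≤ t^2 := pow_nonneg h0 2
    have hq4 : (0:ℝ) ≤ t^4 := pow_nonneg h0 4
    have hq5 : (0:ℝ) ≤ t^5 := pow_nonneg h0 5
    have hq8 : (0:ℝ) ≤ t^8 := pow_nonneg h0 8
    have hq9 : (0:ℝ) ≤ t^9 := pow_nonneg h0 9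
    have hq12 : (0:ℝ) ≤ t^12 := pow_nonneg h0 12
    have hq13 : (0:ℝ) ≤ t^13 := pow_nonneg h0 13
    have hq16 : (0:ℝ) ≤ t^16 := pow_nonneg h0 16
    have hq17 : (0:ℝ) ≤ t^17 := pow_nonneg h0 17
    have hq20 : (0:ℝ) ≤ t^20 := pow_nonneg h0 20
    have hq21 : (0:ℝ) ≤ t^21 := pow_nonneg h0 21
    linarith
  have key : (2506628274631000502/1000000000000000000 : ℝ) * QQ t - 4 * PP ((126328203/100000000) * t)
      = ((378877914684753576156052213143634617918033602690229219294049136797853525251343853622233881841148141600771974343380251801300133850686185917943762865780619660341920345485174769282909876934429560324882354661142970637744506134016736709918685021689762076714562973184901792564202898303899884153191670877257532216663202404362742896953696894622150414472139318909945194937491994407347088190276913090224095706097262635214061136834683777/103623604051968000000000000000000000000000000000000000000000000000000000000000000000000000000000000000000000000000000000000000000000000000000000000000000000000000000000000000000000000000000000000000000000000000000000000000000000000000000000000000000000000000000000000000000000000000000000000000000000000000000000000000000000000000000000000000000000000000000000000000000000000000000000000000000000000000000000000000000000000000) + (1211148350510476859828706277745467751011685853018932055396597161233986227842286123560475082651369646123488332513858867643244039927500729044080284532166773873752404684167120313825369155578923673795047231160141220234630294582483679672408250327190927649522940126664896020282612090946622840231165559413054160561983648669130105021035046290305348841478942475141738532608846030802737658699836535405443752251782972524661155141/828988832415744000000000000000000000000000000000000000000000000000000000000000000000000000000000000000000000000000000000000000000000000000000000000000000000000000000000000000000000000000000000000000000000000000000000000000000000000000000000000000000000000000000000000000000000000000000000000000000000000000000000000000000000000000000000000000000000000000000000000000000000000000000000000000000000000000000000000000000)*t^1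 + (3305190227711113191115602562041635686220874908204479633756762341431066237584398005210342856545923035566105139078990973944113968379124854887391918398013026361159972705286702563611396181207502661133053454862888754089051775696774181810729072316169104546318467161525131550164424072093706619972296588365655238767078504537972012038042264369881035564043591367523958023695319198975893979611062824103033294852934627/138164805402624000000000000000000000000000000000000000000000000000000000000000000000000000000000000000000000000000000000000000000000000000000000000000000000000000000000000000000000000000000000000000000000000000000000000000000000000000000000000000000000000000000000000000000000000000000000000000000000000000000000000000000000000000000000000000000000000000000000000000000000000000000000000000000000000000000000)*t^2 + (-93529521950019358040362911041137872891340103804900990023969833092025811941572499574876447853730905699687933390356021303794706900021958043483983934699447462730553203836689692494188049471104096330770132365931946051110118587337106147690568110818545162822874697649486783339015186957590547566524155319318586884490703384616329527337229036531591733194651510122473358773995488099183503664708480085659699217/828988832415744000000000000000000000000000000000000000000000000000000000000000000000000000000000000000000000000000000000000000000000000000000000000000000000000000000000000000000000000000000000000000000000000000000000000000000000000000000000000000000000000000000000000000000000000000000000000000000000000000000000000000000000000000000000000000000000000000000000000000000000000000000000000000000000000)*t^3 + (6201579503761212729542829534881536869750250988771734065224186881255964523651467254972072685842000151252458069230791708960798651694517175683440398441078473840628247440590131242978768700629082523382829525603417928345765374515373468516658443439679353228462700712411053116704252058815764998900240096337697846311477465603632884050075864240005338223118026268304628276479933004913138486780895499/41449441620787200000000000000000000000000000000000000000000000000000000000000000000000000000000000000000000000000000000000000000000000000000000000000000000000000000000000000000000000000000000000000000000000000000000000000000000000000000000000000000000000000000000000000000000000000000000000000000000000000000000000000000000000000000000000000000000000000000000000000000000000000000000000000)*t^4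 + (5219759702387268338979942826537058576100493356820572986108366604230476852834253862926017432254924739638007580202699809026272219600481964063177805888444969672532204597707063542148803434427636183314965952322704916688032227993355879373933647707096430040880124017105543267053697563569600174936159672798621938700917147715430136045607311748440295397768804557640027280630173300676372817/92109870268416000000000000000000000000000000000000000000000000000000000000000000000000000000000000000000000000000000000000000000000000000000000000000000000000000000000000000000000000000000000000000000000000000000000000000000000000000000000000000000000000000000000000000000000000000000000000000000000000000000000000000000000000000000000000000000000000000000000000000000000000000000)*t^5 + (-306975971946412422312355916966369137579387627796612341068421369049149907523272382153661465564781566982781036239649560572213758041525187208689942538445338551698468524049280003911837976976119285737016012739441520131198963956017702873139447744054488118957010198199392917187177427703410524078489466708889688206952949819194868389128997576813742088364930501304459223098732203/59213488029696000000000000000000000000000000000000000000000000000000000000000000000000000000000000000000000000000000000000000000000000000000000000000000000000000000000000000000000000000000000000000000000000000000000000000000000000000000000000000000000000000000000000000000000000000000000000000000000000000000000000000000000000000000000000000000000000000000000000000000000)*t^6 + (-4991871690435342700658465433753574231975708521627979116408521431618140474682529158036680510266706262154813248687419801961950879272714213877715266568098331683138438600129658022676008538905256232920204604439688879768139901322174863182781988162144536963049735713733577169283979893918756742889468766025472458806586815734985986610020830311037763791047279146209130749/828988832415744000000000000000000000000000000000000000000000000000000000000000000000000000000000000000000000000000000000000000000000000000000000000000000000000000000000000000000000000000000000000000000000000000000000000000000000000000000000000000000000000000000000000000000000000000000000000000000000000000000000000000000000000000000000000000000000000000000000000)*t^7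 + (43838593950523290632613004334304189629914536166235371937079582965328332234894868096624913378612839555580632393175503508555486985957744491166635912116749945854392546070562140583974961670815409769655160348766739578500893135532896503145667711888666080848614630596528408943563017237966713882188802275039748368714189696915710489987578374598853809370238713/17270600675328000000000000000000000000000000000000000000000000000000000000000000000000000000000000000000000000000000000000000000000000000000000000000000000000000000000000000000000000000000000000000000000000000000000000000000000000000000000000000000000000000000000000000000000000000000000000000000000000000000000000000000000000000000000000000000000000000)*t^8 + (179233506222580836857447812673272057340399315299757951630615054342428168279423413307698494516069390092047729343147838438173162653107309846750988305709055915461408807015288969061299552856582421029277958354583204697204048986382629576191972901660266678785222114243434685568151288915549811134354894456615620837008887380893137459317545368578754121/165797766483148800000000000000000000000000000000000000000000000000000000000000000000000000000000000000000000000000000000000000000000000000000000000000000000000000000000000000000000000000000000000000000000000000000000000000000000000000000000000000000000000000000000000000000000000000000000000000000000000000000000000000000000000000000000000000000)*t^9 + (-5243263361821230740407964582462260032821241927843206323431172553703300436436244986724029505737553773950487210974056635626899732249038844931138042677983758539934633248455242470387097149444889780871834515067943126479907558931924095405015194140830137640195177680779684584971431361575838761643606209519490800393520937025778984591331433/37681310564352000000000000000000000000000000000000000000000000000000000000000000000000000000000000000000000000000000000000000000000000000000000000000000000000000000000000000000000000000000000000000000000000000000000000000000000000000000000000000000000000000000000000000000000000000000000000000000000000000000000000000000000000000000000)*t^10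 + (-29473611127041745759326355120294758898147747149816247256553446899137615204932087030209431291509514499411491293826346273375138439999654738634088614180161455209935274323637329250715712840797833533628339505858479904226316251165565709777646255780295672633926667720557845374644377904356452693926301520064157418804009203261452707/276329610805248000000000000000000000000000000000000000000000000000000000000000000000000000000000000000000000000000000000000000000000000000000000000000000000000000000000000000000000000000000000000000000000000000000000000000000000000000000000000000000000000000000000000000000000000000000000000000000000000000000000000000000000000)*t^11 + (393374371201481560159644423445953765183689994594178536465443925988035541824276413625819139107980208374023263985937188597527374350217763945938628605153249884827426821597285996266045002542478556723506381115871394440353223774355633466669120789948702559025217015017098584930810130362707091090589771696226208201629349/15942092931072000000000000000000000000000000000000000000000000000000000000000000000000000000000000000000000000000000000000000000000000000000000000000000000000000000000000000000000000000000000000000000000000000000000000000000000000000000000000000000000000000000000000000000000000000000000000000000000000000000000000000)*t^12 + (108592310423540439159324566937904892684654174397618147849898083787261272416901975142535611066661576429800817075932446175564793255603844993660076154553436936444402638948191999253438079547954400435557121068592579146240727157783541582399750461596653534218616121177060235562223200239555903438054324819392467/9109767389184000000000000000000000000000000000000000000000000000000000000000000000000000000000000000000000000000000000000000000000000000000000000000000000000000000000000000000000000000000000000000000000000000000000000000000000000000000000000000000000000000000000000000000000000000000000000000000000000000000)*t^13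 + (-120542780660749507779584413588662944004315970131457962716199188846744409527557910281044072552179042732302664883311315515849330769500688222779436189899519471564040497870386982516386543503850111873798821855198360032937398362735563896472388990598604289481144191826185347266022532527820399020233/78726384844800000000000000000000000000000000000000000000000000000000000000000000000000000000000000000000000000000000000000000000000000000000000000000000000000000000000000000000000000000000000000000000000000000000000000000000000000000000000000000000000000000000000000000000000000000000000000000000)*t^14 + (-64106009666365061170702422615400607472838342768535227944244845058046715451083465057231441691391361180636811673339247455511238891800153707639127333049809789309722512497630504048562430611434925414015324879069176368262469604517737816678074472011863633976469556003977957983538263342276841/63768371724288000000000000000000000000000000000000000000000000000000000000000000000000000000000000000000000000000000000000000000000000000000000000000000000000000000000000000000000000000000000000000000000000000000000000000000000000000000000000000000000000000000000000000000000000000000000000)*t^15 + (74727084383331154945706980301814705055766487818405500952973531599802382968395264833501828880099477358742780767681745538289472615508449001051858121210730184149945808853152861447578150351074030704813719031577576932894434698980283381928393702071118147733119573708230063584039/468885086208000000000000000000000000000000000000000000000000000000000000000000000000000000000000000000000000000000000000000000000000000000000000000000000000000000000000000000000000000000000000000000000000000000000000000000000000000000000000000000000000000000000000000000000000000)*t^16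 + (105089836134573081046134120332405809881244705662202266554620427629414931970172136590665405974770251569145710104718832763820256433792078804258418409106291396555921856967999161376509659767340309839374656498313410857627168073857346736181240935269627336417803206767283/1250360229888000000000000000000000000000000000000000000000000000000000000000000000000000000000000000000000000000000000000000000000000000000000000000000000000000000000000000000000000000000000000000000000000000000000000000000000000000000000000000000000000000000000000000000)*t^17 + (-964622460824511939549211922951824231154198456718013924452888189350667161244397094028410560347673116773883835435857033673262438205430571817133325168191563721634883433264235043199162015686884123092966911362557906252631796492909931186711958117956798592633/98712649728000000000000000000000000000000000000000000000000000000000000000000000000000000000000000000000000000000000000000000000000000000000000000000000000000000000000000000000000000000000000000000000000000000000000000000000000000000000000000000000000000000000)*t^18 + (-237146926417244496811727840415791363143209026008494627956551217446629413152230251816365823564199577788545415531170487802823207660398761554843526145994971398260910095324203688907311219952256727811646713650229969126966094989954975859429604644843/39485059891200000000000000000000000000000000000000000000000000000000000000000000000000000000000000000000000000000000000000000000000000000000000000000000000000000000000000000000000000000000000000000000000000000000000000000000000000000000000000000000000)*t^19 + (572294976493372205628316029685696956182393491808818159199579512183819312176041403747997377456971367194327516178966655070666900964548819667308201233623552122514400148831154230898420427461301005017393776175721235188681795443956863107/783433728000000000000000000000000000000000000000000000000000000000000000000000000000000000000000000000000000000000000000000000000000000000000000000000000000000000000000000000000000000000000000000000000000000000000000000000000000000000000000)*t^20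 + (1035495181557410413821075287834559543134604550542900794178063386601751964700791962039821825518690534441374097231991844896469549603331688383548508794336794687206439842454604000573467195371332140221554869731706139537268204587/2563964928000000000000000000000000000000000000000000000000000000000000000000000000000000000000000000000000000000000000000000000000000000000000000000000000000000000000000000000000000000000000000000000000000000000000000000000000000000)*t^21 + (-2523804342880900247126190022900105551062635300666755192696556804810599802808379820041111241988119159091562686610024885339923107438967641816942925244031283958071500924626816076246176822521855009574006949034189401/55738368000000000000000000000000000000000000000000000000000000000000000000000000000000000000000000000000000000000000000000000000000000000000000000000000000000000000000000000000000000000000000000000000000000000000000000000)*t^22 + (-141873631903955129253441881782978417900813626221458418654038400671537054760140402712420294315255843002159355474003585703840459630500522953948407136546394515289712840934970450690386800498158388781519401/5046272000000000000000000000000000000000000000000000000000000000000000000000000000000000000000000000000000000000000000000000000000000000000000000000000000000000000000000000000000000000000000000000000000000000000)*t^23) * (t - 827989177/1000000000)^2 + (654281500141268377569459528956475685958414422654529084348532994931734801499395944583470434722714645319932257262098456648742619136019865667350234237838582919670579277808624064572071005606769671695550867410098725706803421068703999555027751166382057019617288498243743037039670840018960769120706245050879352405680719266003831676741440105482149540244931990669835380542681250295122248640984318061512624335681991981118807989/1486356480000000000000000000000000000000000000000000000000000000000000000000000000000000000000000000000000000000000000000000000000000000000000000000000000000000000000000000000000000000000000000000000000000000000000000000000000000000000000000000000000000000000000000000000000000000000000000000000000000000000000000000000000000000000000000000000000000000000000000000000000000000000000000000000000000000000000000000000000000000000)*t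 + (10116648226014093275052290686168268665747809147245119686133465531872199985584815893370116884688535969918149475314211804007312816364253933127053456041555960501163609217068105216793833125546761661036949634297470310422341506841466449029674474608941124864800302627363604628502291889488927669429331638829659216520126411175653781914785117599937097411129068007970799319670887879214636377385217624020039269373202118276737634333329564215778588367/103623604051968000000000000000000000000000000000000000000000000000000000000000000000000000000000000000000000000000000000000000000000000000000000000000000000000000000000000000000000000000000000000000000000000000000000000000000000000000000000000000000000000000000000000000000000000000000000000000000000000000000000000000000000000000000000000000000000000000000000000000000000000000000000000000000000000000000000000000000000000000000000000000000000) := by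
    unfold PP QQ; ring
  have h2 : (0:ℝ) ≤ ((378877914684753576156052213143634617918033602690229219294049136797853525251343853622233881841148141600771974343380251801300133850686185917943762865780619660341920345485174769282909876934429560324882354661142970637744506134016736709918685021689762076714562973184901792564202898303899884153191670877257532216663202404362742896953696894622150414472139318909945194937491994407347088190276913090224095706097262635214061136834683777/103623604051968000000000000000000000000000000000000000000000000000000000000000000000000000000000000000000000000000000000000000000000000000000000000000000000000000000000000000000000000000000000000000000000000000000000000000000000000000000000000000000000000000000000000000000000000000000000000000000000000000000000000000000000000000000000000000000000000000000000000000000000000000000000000000000000000000000000000000000000000000) + (1211148350510476859828706277745467751011685853018932055396597161233986227842286123560475082651369646123488332513858867643244039927500729044080284532166773873752404684167120313825369155578923673795047231160141220234630294582483679672408250327190927649522940126664896020282612090946622840231165559413054160561983648669130105021035046290305348841478942475141738532608846030802737658699836535405443752251782972524661155141/828988832415744000000000000000000000000000000000000000000000000000000000000000000000000000000000000000000000000000000000000000000000000000000000000000000000000000000000000000000000000000000000000000000000000000000000000000000000000000000000000000000000000000000000000000000000000000000000000000000000000000000000000000000000000000000000000000000000000000000000000000000000000000000000000000000000000000000000000000000)*t^1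 + (3305190227711113191115602562041635686220874908204479633756762341431066237584398005210342856545923035566105139078990973944113968379124854887391918398013026361159972705286702563611396181207502661133053454862888754089051775696774181810729072316169104546318467161525131550164424072093706619972296588365655238767078504537972012038042264369881035564043591367523958023695319198975893979611062824103033294852934627/138164805402624000000000000000000000000000000000000000000000000000000000000000000000000000000000000000000000000000000000000000000000000000000000000000000000000000000000000000000000000000000000000000000000000000000000000000000000000000000000000000000000000000000000000000000000000000000000000000000000000000000000000000000000000000000000000000000000000000000000000000000000000000000000000000000000000000000000)*t^2 + (-93529521950019358040362911041137872891340103804900990023969833092025811941572499574876447853730905699687933390356021303794706900021958043483983934699447462730553203836689692494188049471104096330770132365931946051110118587337106147690568110818545162822874697649486783339015186957590547566524155319318586884490703384616329527337229036531591733194651510122473358773995488099183503664708480085659699217/828988832415744000000000000000000000000000000000000000000000000000000000000000000000000000000000000000000000000000000000000000000000000000000000000000000000000000000000000000000000000000000000000000000000000000000000000000000000000000000000000000000000000000000000000000000000000000000000000000000000000000000000000000000000000000000000000000000000000000000000000000000000000000000000000000000000000)*t^3 + (6201579503761212729542829534881536869750250988771734065224186881255964523651467254972072685842000151252458069230791708960798651694517175683440398441078473840628247440590131242978768700629082523382829525603417928345765374515373468516658443439679353228462700712411053116704252058815764998900240096337697846311477465603632884050075864240005338223118026268304628276479933004913138486780895499/41449441620787200000000000000000000000000000000000000000000000000000000000000000000000000000000000000000000000000000000000000000000000000000000000000000000000000000000000000000000000000000000000000000000000000000000000000000000000000000000000000000000000000000000000000000000000000000000000000000000000000000000000000000000000000000000000000000000000000000000000000000000000000000000000000)*t^4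 + (5219759702387268338979942826537058576100493356820572986108366604230476852834253862926017432254924739638007580202699809026272219600481964063177805888444969672532204597707063542148803434427636183314965952322704916688032227993355879373933647707096430040880124017105543267053697563569600174936159672798621938700917147715430136045607311748440295397768804557640027280630173300676372817/92109870268416000000000000000000000000000000000000000000000000000000000000000000000000000000000000000000000000000000000000000000000000000000000000000000000000000000000000000000000000000000000000000000000000000000000000000000000000000000000000000000000000000000000000000000000000000000000000000000000000000000000000000000000000000000000000000000000000000000000000000000000000000000)*t^5 + (-306975971946412422312355916966369137579387627796612341068421369049149907523272382153661465564781566982781036239649560572213758041525187208689942538445338551698468524049280003911837976976119285737016012739441520131198963956017702873139447744054488118957010198199392917187177427703410524078489466708889688206952949819194868389128997576813742088364930501304459223098732203/59213488029696000000000000000000000000000000000000000000000000000000000000000000000000000000000000000000000000000000000000000000000000000000000000000000000000000000000000000000000000000000000000000000000000000000000000000000000000000000000000000000000000000000000000000000000000000000000000000000000000000000000000000000000000000000000000000000000000000000000000000000000)*t^6 + (-4991871690435342700658465433753574231975708521627979116408521431618140474682529158036680510266706262154813248687419801961950879272714213877715266568098331683138438600129658022676008538905256232920204604439688879768139901322174863182781988162144536963049735713733577169283979893918756742889468766025472458806586815734985986610020830311037763791047279146209130749/828988832415744000000000000000000000000000000000000000000000000000000000000000000000000000000000000000000000000000000000000000000000000000000000000000000000000000000000000000000000000000000000000000000000000000000000000000000000000000000000000000000000000000000000000000000000000000000000000000000000000000000000000000000000000000000000000000000000000000000000000)*t^7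 + (43838593950523290632613004334304189629914536166235371937079582965328332234894868096624913378612839555580632393175503508555486985957744491166635912116749945854392546070562140583974961670815409769655160348766739578500893135532896503145667711888666080848614630596528408943563017237966713882188802275039748368714189696915710489987578374598853809370238713/17270600675328000000000000000000000000000000000000000000000000000000000000000000000000000000000000000000000000000000000000000000000000000000000000000000000000000000000000000000000000000000000000000000000000000000000000000000000000000000000000000000000000000000000000000000000000000000000000000000000000000000000000000000000000000000000000000000000000000)*t^8 + (179233506222580836857447812673272057340399315299757951630615054342428168279423413307698494516069390092047729343147838438173162653107309846750988305709055915461408807015288969061299552856582421029277958354583204697204048986382629576191972901660266678785222114243434685568151288915549811134354894456615620837008887380893137459317545368578754121/165797766483148800000000000000000000000000000000000000000000000000000000000000000000000000000000000000000000000000000000000000000000000000000000000000000000000000000000000000000000000000000000000000000000000000000000000000000000000000000000000000000000000000000000000000000000000000000000000000000000000000000000000000000000000000000000000000000)*t^9 + (-5243263361821230740407964582462260032821241927843206323431172553703300436436244986724029505737553773950487210974056635626899732249038844931138042677983758539934633248455242470387097149444889780871834515067943126479907558931924095405015194140830137640195177680779684584971431361575838761643606209519490800393520937025778984591331433/37681310564352000000000000000000000000000000000000000000000000000000000000000000000000000000000000000000000000000000000000000000000000000000000000000000000000000000000000000000000000000000000000000000000000000000000000000000000000000000000000000000000000000000000000000000000000000000000000000000000000000000000000000000000000000000000)*t^10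 + (-29473611127041745759326355120294758898147747149816247256553446899137615204932087030209431291509514499411491293826346273375138439999654738634088614180161455209935274323637329250715712840797833533628339505858479904226316251165565709777646255780295672633926667720557845374644377904356452693926301520064157418804009203261452707/276329610805248000000000000000000000000000000000000000000000000000000000000000000000000000000000000000000000000000000000000000000000000000000000000000000000000000000000000000000000000000000000000000000000000000000000000000000000000000000000000000000000000000000000000000000000000000000000000000000000000000000000000000000000000)*t^11 + (393374371201481560159644423445953765183689994594178536465443925988035541824276413625819139107980208374023263985937188597527374350217763945938628605153249884827426821597285996266045002542478556723506381115871394440353223774355633466669120789948702559025217015017098584930810130362707091090589771696226208201629349/15942092931072000000000000000000000000000000000000000000000000000000000000000000000000000000000000000000000000000000000000000000000000000000000000000000000000000000000000000000000000000000000000000000000000000000000000000000000000000000000000000000000000000000000000000000000000000000000000000000000000000000000000000)*t^12 + (108592310423540439159324566937904892684654174397618147849898083787261272416901975142535611066661576429800817075932446175564793255603844993660076154553436936444402638948191999253438079547954400435557121068592579146240727157783541582399750461596653534218616121177060235562223200239555903438054324819392467/9109767389184000000000000000000000000000000000000000000000000000000000000000000000000000000000000000000000000000000000000000000000000000000000000000000000000000000000000000000000000000000000000000000000000000000000000000000000000000000000000000000000000000000000000000000000000000000000000000000000000000000)*t^13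 + (-120542780660749507779584413588662944004315970131457962716199188846744409527557910281044072552179042732302664883311315515849330769500688222779436189899519471564040497870386982516386543503850111873798821855198360032937398362735563896472388990598604289481144191826185347266022532527820399020233/78726384844800000000000000000000000000000000000000000000000000000000000000000000000000000000000000000000000000000000000000000000000000000000000000000000000000000000000000000000000000000000000000000000000000000000000000000000000000000000000000000000000000000000000000000000000000000000000000000000)*t^14 + (-64106009666365061170702422615400607472838342768535227944244845058046715451083465057231441691391361180636811673339247455511238891800153707639127333049809789309722512497630504048562430611434925414015324879069176368262469604517737816678074472011863633976469556003977957983538263342276841/63768371724288000000000000000000000000000000000000000000000000000000000000000000000000000000000000000000000000000000000000000000000000000000000000000000000000000000000000000000000000000000000000000000000000000000000000000000000000000000000000000000000000000000000000000000000000000000000000)*t^15 + (74727084383331154945706980301814705055766487818405500952973531599802382968395264833501828880099477358742780767681745538289472615508449001051858121210730184149945808853152861447578150351074030704813719031577576932894434698980283381928393702071118147733119573708230063584039/468885086208000000000000000000000000000000000000000000000000000000000000000000000000000000000000000000000000000000000000000000000000000000000000000000000000000000000000000000000000000000000000000000000000000000000000000000000000000000000000000000000000000000000000000000000000000)*t^16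 + (105089836134573081046134120332405809881244705662202266554620427629414931970172136590665405974770251569145710104718832763820256433792078804258418409106291396555921856967999161376509659767340309839374656498313410857627168073857346736181240935269627336417803206767283/1250360229888000000000000000000000000000000000000000000000000000000000000000000000000000000000000000000000000000000000000000000000000000000000000000000000000000000000000000000000000000000000000000000000000000000000000000000000000000000000000000000000000000000000000000000)*t^17 + (-964622460824511939549211922951824231154198456718013924452888189350667161244397094028410560347673116773883835435857033673262438205430571817133325168191563721634883433264235043199162015686884123092966911362557906252631796492909931186711958117956798592633/98712649728000000000000000000000000000000000000000000000000000000000000000000000000000000000000000000000000000000000000000000000000000000000000000000000000000000000000000000000000000000000000000000000000000000000000000000000000000000000000000000000000000000000)*t^18 + (-237146926417244496811727840415791363143209026008494627956551217446629413152230251816365823564199577788545415531170487802823207660398761554843526145994971398260910095324203688907311219952256727811646713650229969126966094989954975859429604644843/39485059891200000000000000000000000000000000000000000000000000000000000000000000000000000000000000000000000000000000000000000000000000000000000000000000000000000000000000000000000000000000000000000000000000000000000000000000000000000000000000000000000)*t^19 + (572294976493372205628316029685696956182393491808818159199579512183819312176041403747997377456971367194327516178966655070666900964548819667308201233623552122514400148831154230898420427461301005017393776175721235188681795443956863107/783433728000000000000000000000000000000000000000000000000000000000000000000000000000000000000000000000000000000000000000000000000000000000000000000000000000000000000000000000000000000000000000000000000000000000000000000000000000000000000000)*t^20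 + (1035495181557410413821075287834559543134604550542900794178063386601751964700791962039821825518690534441374097231991844896469549603331688383548508794336794687206439842454604000573467195371332140221554869731706139537268204587/2563964928000000000000000000000000000000000000000000000000000000000000000000000000000000000000000000000000000000000000000000000000000000000000000000000000000000000000000000000000000000000000000000000000000000000000000000000000000000)*t^21 + (-2523804342880900247126190022900105551062635300666755192696556804810599802808379820041111241988119159091562686610024885339923107438967641816942925244031283958071500924626816076246176822521855009574006949034189401/55738368000000000000000000000000000000000000000000000000000000000000000000000000000000000000000000000000000000000000000000000000000000000000000000000000000000000000000000000000000000000000000000000000000000000000000000000)*t^22 + (-141873631903955129253441881782978417900813626221458418654038400671537054760140402712420294315255843002159355474003585703840459630500522953948407136546394515289712840934970450690386800498158388781519401/5046272000000000000000000000000000000000000000000000000000000000000000000000000000000000000000000000000000000000000000000000000000000000000000000000000000000000000000000000000000000000000000000000000000000000000)*t^23) * (t - 827989177/1000000000)^2 := mul_nonneg hA (sq_nonneg _)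
  have h3 : (0:ℝ) ≤ (654281500141268377569459528956475685958414422654529084348532994931734801499395944583470434722714645319932257262098456648742619136019865667350234237838582919670579277808624064572071005606769671695550867410098725706803421068703999555027751166382057019617288498243743037039670840018960769120706245050879352405680719266003831676741440105482149540244931990669835380542681250295122248640984318061512624335681991981118807989/1486356480000000000000000000000000000000000000000000000000000000000000000000000000000000000000000000000000000000000000000000000000000000000000000000000000000000000000000000000000000000000000000000000000000000000000000000000000000000000000000000000000000000000000000000000000000000000000000000000000000000000000000000000000000000000000000000000000000000000000000000000000000000000000000000000000000000000000000000000000000000000)*t := by positivity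
  linarith

/- ### sqrt(2 pi) rational bounds -/
lemma s_le_sqrt2pi : (2506628274631000502/1000000000000000000 : ℝ) ≤ Real.sqrt (2*π) := by
  have h1 : ((2506628274631000502/1000000000000000000 : ℝ))^2 ≤ 2*π := by nlinarith [Real.pi_gt_d20]
  calc (2506628274631000502/1000000000000000000 : ℝ)
      = Real.sqrt (((2506628274631000502/1000000000000000000 : ℝ))^2) := (Real.sqrt_sq (by norm_num)).symm
    _ ≤ Real.sqrt (2*π) := Real.sqrt_le_sqrt h1

lemma sqrt2pi_le_s' : Real.sqrt (2*π) ≤ (2506628274631000503/1000000000000000000 : ℝ) := by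
  have h1 : 2*π ≤ ((2506628274631000503/1000000000000000000 : ℝ))^2 := by nlinarith [Real.pi_lt_d20]
  calc Real.sqrt (2*π) ≤ Real.sqrt (((2506628274631000503/1000000000000000000 : ℝ))^2) := Real.sqrt_le_sqrt h1
    _ = (2506628274631000503/1000000000000000000 : ℝ) := Real.sqrt_sq (by norm_num)

/- ### sSup framework -/
lemma himg_ne (β : ℝ) : ((fun t : ℝ => 2 * Phi (β * t) * Real.exp (-t ^ 2 / 2)) '' Set.Ici 0).Nonempty :=
  ⟨_, Set.mem_image_of_mem _ (Set.self_mem_Ici)⟩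

lemma h_le_two {β t : ℝ} (hβ : 0 ≤ β) (ht : 0 ≤ t) :
    2 * Phi (β * t) * Real.exp (-t ^ 2 / 2) ≤ 2 := by
  have h1 := Phi_le_one (β*t) (mul_nonneg hβ ht)
  have h0 := Phi_nonneg (β*t) (mul_nonneg hβ ht)
  have hE : Real.exp (-t ^ 2 / 2) ≤ 1 := by
    rw [show (1:ℝ) = Real.exp 0 by simp]
    apply Real.exp_le_exp.mpr; nlinarith [sq_nonneg t]
  have hE0 := Real.exp_pos (-t ^ 2 / 2)
  nlinarith

lemma bddA {β : ℝ} (hβ : 0 ≤ β) :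
    BddAbove ((fun t : ℝ => 2 * Phi (β * t) * Real.exp (-t ^ 2 / 2)) '' Set.Ici 0) := by
  refine ⟨2, ?_⟩
  rintro x ⟨t, ht, rfl⟩
  exact h_le_two hβ ht

lemma le_g {β t : ℝ} (hβ : 0 ≤ β) (ht : 0 ≤ t) :
    2 * Phi (β * t) * Real.exp (-t ^ 2 / 2) ≤ g β :=
  le_csSup (bddA hβ) ⟨t, ht, rfl⟩

lemma g_le {β c : ℝ} (h : ∀ t : ℝ, 0 ≤ t → 2 * Phi (β * t) * Real.exp (-t ^ 2 / 2) ≤ c) :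
    g β ≤ c := by
  apply csSup_le (himg_ne β)
  rintro x ⟨t, ht, rfl⟩
  exact h t ht

lemma g_mono {β₁ β₂ : ℝ} (h1 : 0 ≤ β₁) (h12 : β₁ ≤ β₂) : g β₁ ≤ g β₂ := by
  apply g_le
  intro t ht
  have hΦ : Phi (β₁ * t) ≤ Phi (β₂ * t) :=
    Phi_mono (mul_nonneg h1 ht) (mul_le_mul_of_nonneg_right h12 ht)
  have := le_g (le_trans h1 h12) ht (t := t) (β := β₂)
  nlinarith [Real.exp_pos (-t ^ 2 / 2)]

lemma g_lip {β₁ β₂ : ℝ} (h1 : 0 ≤ β₁) (h12 : β₁ ≤ β₂) : g β₂ ≤ g β₁ + (β₂ - β₁) := by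
  apply g_le
  intro t ht
  have hu : (0:ℝ) ≤ β₁ * t := mul_nonneg h1 ht
  have huv : β₁ * t ≤ β₂ * t := mul_le_mul_of_nonneg_right h12 ht
  have hIlip := I_lip hu huv
  have hΦ : Phi (β₂ * t) ≤ Phi (β₁ * t) + (1 / Real.sqrt (2*π)) * (2*(β₂*t - β₁*t)) := by
    rw [Phi_eq, Phi_eq]
    have h2 := mul_le_mul_of_nonneg_left hIlip (show (0:ℝ) ≤ 1 / Real.sqrt (2*π) by positivity)
    rw [mul_add] at h2
    linarith
  have hkey : 4 * t * Real.exp (-t ^ 2 / 2) ≤ Real.sqrt (2*π) := by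
    have h5 : (t^2+1)/2 ≤ Real.exp ((t^2-1)/2) := by
      have := Real.add_one_le_exp ((t^2-1)/2); linarith
    have h6 : Real.exp (t^2/2) = Real.exp (1/2) * Real.exp ((t^2-1)/2) := by
      rw [← Real.exp_add]; ring_nf
    have h7 : (13/8 : ℝ) ≤ Real.exp (1/2) := by
      have h := Real.sum_le_exp_of_nonneg (x := (1/2:ℝ)) (by norm_num) 3
      simp [Finset.sum_range_succ, Nat.factorial] at h
      linarith [h]
    have h8 : (5/2 : ℝ) ≤ Real.sqrt (2*π) := by
      have : ((5/2:ℝ))^2 ≤ 2*π := by nlinarith [Real.pi_gt_d2]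
      calc (5/2 : ℝ) = Real.sqrt ((5/2:ℝ)^2) := (Real.sqrt_sq (by norm_num)).symm
        _ ≤ Real.sqrt (2*π) := Real.sqrt_le_sqrt this
    have hEe : Real.exp (-t ^ 2 / 2) = 1 / Real.exp (t^2/2) := by
      rw [show (-t ^ 2 / 2 : ℝ) = -(t^2/2) by ring, Real.exp_neg, one_div]
    rw [hEe]
    rw [mul_one_div, div_le_iff₀ (Real.exp_pos _)]
    have hE1 : (0:ℝ) < Real.exp ((t^2-1)/2) := Real.exp_pos _
    rw [h6]
    have ht2 : 4 * t ≤ (5/2) * ((13/8) * ((t^2+1)/2)) := by nlinarith [sq_nonneg (t-1)]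
    calc 4 * t ≤ (5/2) * ((13/8) * ((t^2+1)/2)) := ht2
      _ ≤ Real.sqrt (2*π) * ((13/8) * ((t^2+1)/2)) := by
          apply mul_le_mul_of_nonneg_right h8; nlinarith [sq_nonneg t]
      _ ≤ Real.sqrt (2*π) * (Real.exp (1/2) * Real.exp ((t^2-1)/2)) := by
          apply mul_le_mul_of_nonneg_left _ (Real.sqrt_nonneg _)
          have := mul_le_mul h7 h5 (by nlinarith [sq_nonneg t]) (by linarith)
          linarith
  have hΔ : (0:ℝ) ≤ β₂ - β₁ := by linarith
  have hEpos := Real.exp_pos (-t ^ 2 / 2)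
  have e1 : 2 * Phi (β₂ * t) * Real.exp (-t ^ 2 / 2)
      ≤ 2 * (Phi (β₁ * t) + (1 / Real.sqrt (2*π)) * (2*(β₂*t - β₁*t))) * Real.exp (-t ^ 2 / 2) := by
    apply mul_le_mul_of_nonneg_right _ hEpos.le
    linarith
  have e2 : 2 * (Phi (β₁ * t) + (1 / Real.sqrt (2*π)) * (2*(β₂*t - β₁*t))) * Real.exp (-t ^ 2 / 2)
      = 2 * Phi (β₁ * t) * Real.exp (-t ^ 2 / 2)
        + (4 * t * Real.exp (-t ^ 2 / 2)) * (β₂ - β₁) * (1 / Real.sqrt (2*π)) := by ring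
  have e3 : (4 * t * Real.exp (-t ^ 2 / 2)) * (β₂ - β₁) * (1 / Real.sqrt (2*π))
      ≤ Real.sqrt (2*π) * (β₂ - β₁) * (1 / Real.sqrt (2*π)) := by
    apply mul_le_mul_of_nonneg_right (mul_le_mul_of_nonneg_right hkey hΔ) (by positivity)
  have e4 : Real.sqrt (2*π) * (β₂ - β₁) * (1 / Real.sqrt (2*π)) = β₂ - β₁ := by
    field_simp
  have e5 := le_g h1 ht (t := t) (β := β₁)
  linarith

/- ### the two numeric endpoints -/
lemma gC : g (126328203/100000000) ≤ 1 := by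
  apply g_le
  intro t ht
  by_cases hT : t ≤ 1178/1000
  · have hu : (0:ℝ) ≤ (126328203/100000000) * t := by positivity
    have hI0 := I_nonneg _ hu
    have hΦ : Phi ((126328203/100000000) * t) ≤ (1 / Real.sqrt (2*π)) * (2 * PP ((126328203/100000000) * t)) := by
      rw [Phi_eq]
      exact mul_le_mul_of_nonneg_left (I_le_PP _ hu) (by positivity)
    have hc := cert_C t ht hT
    have hQp := QQ_pos t
    have h4 : 4 * PP ((126328203/100000000) * t) ≤ Real.sqrt (2*π) * Real.exp (t^2/2) :=
      calc 4 * PP ((126328203/100000000) * t)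
          ≤ (2506628274631000502/1000000000000000000) * QQ t := hc
        _ ≤ Real.sqrt (2*π) * QQ t := mul_le_mul_of_nonneg_right s_le_sqrt2pi hQp.le
        _ ≤ Real.sqrt (2*π) * Real.exp (t^2/2) :=
            mul_le_mul_of_nonneg_left (QQ_le_exp t) (Real.sqrt_nonneg _)
    have hEpos := Real.exp_pos (-t ^ 2 / 2)
    have hSpos := sqrt2pi_pos
    have step1 : 2 * Phi ((126328203/100000000) * t) * Real.exp (-t ^ 2 / 2)
        ≤ 2 * ((1 / Real.sqrt (2*π)) * (2 * PP ((126328203/100000000) * t))) * Real.exp (-t ^ 2 / 2) := by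
      apply mul_le_mul_of_nonneg_right _ hEpos.le
      linarith
    have hexp1 : Real.exp (t^2/2) * Real.exp (-t ^ 2 / 2) = 1 := by
      rw [← Real.exp_add, show t^2/2 + -t ^ 2 / 2 = 0 by ring, Real.exp_zero]
    have step2 : 2 * ((1 / Real.sqrt (2*π)) * (2 * PP ((126328203/100000000) * t))) * Real.exp (-t ^ 2 / 2)
        ≤ 2 * ((1 / Real.sqrt (2*π)) * ((Real.sqrt (2*π) * Real.exp (t^2/2)) / 2)) * Real.exp (-t ^ 2 / 2) := by
      apply mul_le_mul_of_nonneg_right _ hEpos.le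
      apply mul_le_mul_of_nonneg_left _ (by norm_num)
      apply mul_le_mul_of_nonneg_left _ (by positivity)
      linarith
    have step3 : 2 * ((1 / Real.sqrt (2*π)) * ((Real.sqrt (2*π) * Real.exp (t^2/2)) / 2)) * Real.exp (-t ^ 2 / 2) = 1 := by
      field_simp
      rw [neg_div] at hexp1
      linarith [hexp1]
    linarith
  · push_neg at hT
    have hu : (0:ℝ) ≤ (126328203/100000000) * t := by positivity
    have hΦ1 := Phi_le_one _ hu
    have hΦ0 := Phi_nonneg _ hu
    have hE : Real.exp (-t ^ 2 / 2) ≤ Real.exp (-(1178/1000:ℝ)^2/2) := by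
      apply Real.exp_le_exp.mpr; nlinarith
    have hlog : Real.log 2 ≤ ((1178/1000:ℝ))^2/2 := by nlinarith [Real.log_two_lt_d9]
    have h3 : (2:ℝ) ≤ Real.exp ((1178/1000:ℝ)^2/2) := by
      calc (2:ℝ) = Real.exp (Real.log 2) := (Real.exp_log (by norm_num)).symm
        _ ≤ _ := Real.exp_le_exp.mpr hlog
    have h2 : Real.exp (-(1178/1000:ℝ)^2/2) ≤ 1/2 := by
      rw [show (-(1178/1000:ℝ)^2/2) = -((1178/1000:ℝ)^2/2) by ring, Real.exp_neg]
      have := one_div_le_one_div_of_le (by norm_num : (0:ℝ) < 2) h3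
      rw [one_div] at this
      linarith
    have hEpos := Real.exp_pos (-t ^ 2 / 2)
    nlinarith

lemma gD : 1 < g (12632825/10000000) := by
  have ht0 : (0:ℝ) ≤ 207/250 := by norm_num
  have hb : (0:ℝ) ≤ 12632825/10000000 := by norm_num
  refine lt_of_lt_of_le ?_ (le_g hb ht0)
  have hu : (0:ℝ) ≤ (12632825/10000000 : ℝ) * (207/250) := by norm_num
  have hI : 2 * PL ((12632825/10000000 : ℝ) * (207/250)) ≤
      ∫ x in (-((12632825/10000000 : ℝ) * (207/250)))..((12632825/10000000 : ℝ) * (207/250)), Real.exp (-x ^ 2 / 2) :=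
    PL_le_I _ hu (by norm_num)
  have hPL : (0:ℝ) < PL ((12632825/10000000 : ℝ) * (207/250)) := by unfold PL; norm_num
  have hΦ : (1 / (2506628274631000503/1000000000000000000 : ℝ)) * (2 * PL ((12632825/10000000 : ℝ) * (207/250)))
      ≤ Phi ((12632825/10000000 : ℝ) * (207/250)) := by
    rw [Phi_eq]
    have hstep : (1 / (2506628274631000503/1000000000000000000 : ℝ)) ≤ 1 / Real.sqrt (2*π) :=
      one_div_le_one_div_of_le sqrt2pi_pos sqrt2pi_le_s'
    calc (1 / (2506628274631000503/1000000000000000000 : ℝ)) * (2 * PL ((12632825/10000000 : ℝ) * (207/250)))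
        ≤ (1 / Real.sqrt (2*π)) * (2 * PL ((12632825/10000000 : ℝ) * (207/250))) :=
          mul_le_mul_of_nonneg_right hstep (by linarith)
      _ ≤ (1 / Real.sqrt (2*π)) * ∫ x in (-((12632825/10000000 : ℝ) * (207/250)))..((12632825/10000000 : ℝ) * (207/250)), Real.exp (-x ^ 2 / 2) :=
          mul_le_mul_of_nonneg_left hI (by positivity)
  have hEb : Real.exp (((207/250:ℝ))^2/2) ≤ ((587828743287199916201602294038125372842933263304636801531/417232513427734375000000000000000000000000000000000000000) : ℝ) := by
    have h := Real.exp_bound' (x := ((207/250:ℝ))^2/2) (by positivity) (by norm_num) (n := 10) (by norm_num)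
    simp [Finset.sum_range_succ, Nat.factorial] at h
    linarith [h]
  have hE : (1 / ((587828743287199916201602294038125372842933263304636801531/417232513427734375000000000000000000000000000000000000000) : ℝ)) ≤ Real.exp (-(207/250:ℝ) ^ 2 / 2) := by
    rw [show (-(207/250:ℝ) ^ 2 / 2) = -(((207/250:ℝ))^2/2) by ring, Real.exp_neg, ← one_div]
    exact one_div_le_one_div_of_le (Real.exp_pos _) hEb
  have hΦ0 : (0:ℝ) ≤ Phi ((12632825/10000000 : ℝ) * (207/250)) := Phi_nonneg _ hu
  have hnum : 1 < 2 * ((1 / (2506628274631000503/1000000000000000000 : ℝ)) * (2 * PL ((12632825/10000000 : ℝ) * (207/250)))) * (1 / ((587828743287199916201602294038125372842933263304636801531/417232513427734375000000000000000000000000000000000000000) : ℝ)) := by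
    unfold PL; norm_num
  have hm : 2 * ((1 / (2506628274631000503/1000000000000000000 : ℝ)) * (2 * PL ((12632825/10000000 : ℝ) * (207/250)))) * (1 / ((587828743287199916201602294038125372842933263304636801531/417232513427734375000000000000000000000000000000000000000) : ℝ))
      ≤ 2 * Phi ((12632825/10000000 : ℝ) * (207/250)) * Real.exp (-(207/250:ℝ) ^ 2 / 2) := by
    apply mul_le_mul (by linarith) hE (by positivity) (by linarith)
  linarith

/- ### final assembly -/
theorem exists_beta_zero :
    ∃ β₀ : ℝ, 1.263282 < β₀ ∧ β₀ < 1.263283 ∧ g β₀ = 1 := by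
  have hga : g (126328203/100000000) ≤ 1 := gC
  have hgb : 1 < g (12632825/10000000) := gD
  have hab : (126328203/100000000 : ℝ) ≤ 12632825/10000000 := by norm_num
  set S : Set ℝ := {β : ℝ | β ∈ Set.Icc (126328203/100000000 : ℝ) (12632825/10000000 : ℝ) ∧ g β ≤ 1} with hS
  have haS : (126328203/100000000 : ℝ) ∈ S := ⟨⟨le_refl _, hab⟩, hga⟩
  have hSne : S.Nonempty := ⟨_, haS⟩
  have hSbdd : BddAbove S := ⟨12632825/10000000, fun β hβ => hβ.1.2⟩
  set β₀ := sSup S with hβ₀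
  have hage : (126328203/100000000 : ℝ) ≤ β₀ := le_csSup hSbdd haS
  have hble : β₀ ≤ 12632825/10000000 := csSup_le hSne (fun β hβ => hβ.1.2)
  have ha0 : (0:ℝ) ≤ 126328203/100000000 := by norm_num
  have hg₀le : g β₀ ≤ 1 := by
    by_contra hcon
    push_neg at hcon
    obtain ⟨β, hβS, hββ⟩ := exists_lt_of_lt_csSup hSne
      (show β₀ - (g β₀ - 1) < β₀ by linarith)
    have hβ0 : (0:ℝ) ≤ β := le_trans ha0 hβS.1.1
    have hβle : β ≤ β₀ := le_csSup hSbdd hβS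
    have hl := g_lip hβ0 hβle
    have := hβS.2
    linarith
  have hbcap : β₀ < 12632825/10000000 := by
    cases' lt_or_eq_of_le hble with h h
    · exact h
    · exfalso; rw [h] at hg₀le; linarith
  have hg₀ge : 1 ≤ g β₀ := by
    by_contra hcon
    push_neg at hcon
    set δ : ℝ := min ((1 - g β₀)/2) (12632825/10000000 - β₀) with hδ
    have hδpos : 0 < δ := by
      apply lt_min (by linarith) (by linarith)
    have hβ₀0 : (0:ℝ) ≤ β₀ := le_trans ha0 hage
    have hmem : β₀ + δ ∈ Set.Icc (126328203/100000000 : ℝ) (12632825/10000000 : ℝ) := by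
      constructor
      · linarith
      · have := min_le_right ((1 - g β₀)/2) (12632825/10000000 - β₀); linarith
    have hnotS : β₀ + δ ∉ S := by
      intro hmemS
      have := le_csSup hSbdd hmemS
      linarith
    have hgt : 1 < g (β₀ + δ) := by
      by_contra hle2
      push_neg at hle2
      exact hnotS ⟨hmem, hle2⟩
    have hl := g_lip hβ₀0 (show β₀ ≤ β₀ + δ by linarith)
    have := min_le_left ((1 - g β₀)/2) (12632825/10000000 - β₀)
    have : g (β₀ + δ) ≤ g β₀ + δ := by simpa using hl
    linarith [min_le_left ((1 - g β₀)/2) (12632825/10000000 - β₀)]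
  refine ⟨β₀, ?_, ?_, le_antisymm hg₀le hg₀ge⟩
  · calc (1.263282 : ℝ) < 126328203/100000000 := by norm_num
      _ ≤ β₀ := hage
  · calc β₀ < 12632825/10000000 := hbcap
      _ < 1.263283 := by norm_num
end
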